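/- arXiv:2105.09056 — 3 statements merged into one kernel-verified Lean document; each statement's English description precedes it below -/
import Mathlib

section
/- Let n ≥ 3, let b₁,…,b_{n−1} ∈ ℂ, and let B ∈ M_n(ℂ) be the matrix with B_{i,i+1} = b_i, B_{i+1,i} = −conj(b_i) for i = 1,…,n−1 and all other entries 0. Then the operator norm of B (with respect to the Euclidean norm on ℂ^n) satisfies: (i) max_{1≤i≤n−2} sqrt(|b_i|² + |b_{i+1}|²) ≤ ‖B‖; (ii) (2/n)·Σ_{i=1}^{n−1} |b_i| ≤ ‖B‖; (iii) ‖B‖ ≤ max_{1≤i≤n−2} (|b_i| + |b_{i+1}|); (iv) ‖B‖ ≤ 2·cos(π/(n+1))·max_{1≤i≤n−1} |b_i|. -/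
open scoped ENNReal

/-- The operator norm on square matrices induced by the Euclidean (ℓ²) norm. -/
noncomputable def opNorm {ι : Type*} [Finite ι] (M : Matrix ι ι ℂ) : ℝ :=
  letI := Fintype.ofFinite ι
  letI := Classical.decEq ι
  ‖Matrix.toEuclideanCLM (𝕜 := ℂ) M‖

/-- The tridiagonal antisymmetric-type matrix with superdiagonal `b 0, …, b (n-2)`. -/
noncomputable def Bmat (n : ℕ) (b : ℕ → ℂ) : Matrix (Fin n) (Fin n) ℂ :=
  Matrix.of fun i j =>
    if (i : ℕ) + 1 = (j : ℕ) then b (i : ℕ)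
    else if (j : ℕ) + 1 = (i : ℕ) then -(starRingEnd ℂ) (b (j : ℕ))
    else 0

set_option maxHeartbeats 1000000
set_option synthInstance.maxHeartbeats 1000000
set_option linter.unusedTactic false
set_option linter.unreachableTactic false
set_option linter.unnecessarySeqFocus false

open Finset
local notation "⟪" x ", " y "⟫" => @inner ℂ _ _ x y

namespace Stmt17
variable {n : ℕ}



lemma opNorm_eq {n : ℕ} (M : Matrix (Fin n) (Fin n) ℂ) :
    opNorm M = ‖Matrix.toEuclideanCLM (𝕜 := ℂ) M‖ := by
  unfold opNorm
  congr!

variable {n : ℕ}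

/-- extend a Euclidean vector to a function on ℕ by zero -/
noncomputable def pad (x : EuclideanSpace ℂ (Fin n)) (k : ℕ) : ℂ :=
  if h : k < n then x ⟨k, h⟩ else 0

noncomputable def vec (n : ℕ) (g : ℕ → ℂ) : EuclideanSpace ℂ (Fin n) :=
  (WithLp.equiv 2 (Fin n → ℂ)).symm (fun j => g (j : ℕ))

@[simp] lemma pad_coe (x : EuclideanSpace ℂ (Fin n)) (i : Fin n) : pad x (i : ℕ) = x i := by
  simp [pad]

@[simp] lemma pad_vec (g : ℕ → ℂ) (k : ℕ) (hk : k < n) : pad (vec n g) k = g k := by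
  simp only [pad, vec, hk, dif_pos]
  rfl

lemma norm_sq_eq (x : EuclideanSpace ℂ (Fin n)) :
    ‖x‖ ^ 2 = ∑ k ∈ Finset.range n, ‖pad x k‖ ^ 2 := by
  rw [EuclideanSpace.norm_eq, Real.sq_sqrt (by positivity)]
  rw [← Fin.sum_univ_eq_sum_range (fun k => ‖pad x k‖ ^ 2)]
  simp

lemma sum_guard (G : ℕ → ℂ) :
    (∑ i ∈ range n, if i + 1 ∈ range n then G i else 0) = ∑ i ∈ range (n - 1), G i := by
  rw [← Finset.sum_subset (Finset.range_subset_range.mpr (Nat.sub_le n 1))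
    (fun i hi hni => if_neg (fun hmem => hni (by simp only [mem_range] at *; omega)))]
  exact Finset.sum_congr rfl fun i hi => if_pos (by simp only [mem_range] at *; omega)

lemma inner_key (b : ℕ → ℂ) (x y : EuclideanSpace ℂ (Fin n)) :
    ⟪x, (Matrix.toEuclideanCLM (𝕜 := ℂ) (Bmat n b)) y⟫ =
      (∑ k ∈ range (n - 1), b k * (starRingEnd ℂ) (pad x k) * pad y (k + 1)) -
      (∑ k ∈ range (n - 1), (starRingEnd ℂ) (b k) * (starRingEnd ℂ) (pad x (k + 1)) * pad y k) := by
  classical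
  set c := starRingEnd ℂ
  set F : ℕ → ℕ → ℂ := fun i j =>
    c (pad x i) * ((if i + 1 = j then b i else if j + 1 = i then -c (b j) else 0) * pad y j)
    with hF
  have hTy : ∀ i : Fin n, (Matrix.toEuclideanCLM (𝕜 := ℂ) (Bmat n b)) y i
      = ∑ j : Fin n, Bmat n b i j * y j := fun i => by
    have h := congrFun (Matrix.ofLp_toEuclideanCLM (Bmat n b) y) i
    simpa [Matrix.toLin'_apply, Matrix.mulVec, dotProduct] using h
  have stepA : ⟪x, (Matrix.toEuclideanCLM (𝕜 := ℂ) (Bmat n b)) y⟫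
      = ∑ i ∈ range n, ∑ j ∈ range n, F i j := by
    simp only [PiLp.inner_apply, RCLike.inner_apply]
    rw [← Fin.sum_univ_eq_sum_range (fun i => ∑ j ∈ range n, F i j)]
    refine Finset.sum_congr rfl fun i _ => ?_
    rw [hTy, Finset.sum_mul, ← Fin.sum_univ_eq_sum_range (fun j => F (i : ℕ) j)]
    refine Finset.sum_congr rfl fun j _ => ?_
    simp only [hF, pad_coe]
    simp only [Bmat, Matrix.of_apply]; ring
  have stepB : ∀ i j : ℕ, F i j =
      (if i + 1 = j then c (pad x i) * b i * pad y j else 0) +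
      (if j + 1 = i then -(c (b j) * c (pad x i) * pad y j) else 0) := by
    intro i j
    simp only [hF]
    split_ifs with h1 h2 <;> first | omega | ring
  rw [stepA]
  simp only [stepB, Finset.sum_add_distrib]
  have e1 : (∑ i ∈ range n, ∑ j ∈ range n, if i + 1 = j then c (pad x i) * b i * pad y j else 0)
      = ∑ k ∈ range (n - 1), b k * c (pad x k) * pad y (k + 1) := by
    have h : ∀ i ∈ range n, (∑ j ∈ range n, if i + 1 = j then c (pad x i) * b i * pad y j else 0)
        = (if i + 1 ∈ range n then c (pad x i) * b i * pad y (i+1) else 0) := fun i _ =>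
      Finset.sum_ite_eq (range n) (i+1) _
    rw [Finset.sum_congr rfl h, sum_guard]
    exact Finset.sum_congr rfl fun k _ => by ring
  have e2 : (∑ i ∈ range n, ∑ j ∈ range n, if j + 1 = i then -(c (b j) * c (pad x i) * pad y j) else 0)
      = -∑ k ∈ range (n - 1), c (b k) * c (pad x (k + 1)) * pad y k := by
    rw [Finset.sum_comm]
    have h : ∀ j ∈ range n, (∑ i ∈ range n, if j + 1 = i then -(c (b j) * c (pad x i) * pad y j) else 0)
        = (if j + 1 ∈ range n then -(c (b j) * c (pad x (j+1)) * pad y j) else 0) := fun j _ =>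
      Finset.sum_ite_eq (range n) (j+1) _
    rw [Finset.sum_congr rfl h, sum_guard, ← Finset.sum_neg_distrib]
  rw [e1, e2, sub_eq_add_neg]

/-- Polarization: norm bound for "real-symmetric" operators from the quadratic form. -/
lemma norm_le_of_sym {E : Type*} [NormedAddCommGroup E] [InnerProductSpace ℂ E]
    (A : E →L[ℂ] E) (C : ℝ) (hC : 0 ≤ C)
    (hsym : ∀ x y : E, Complex.re ⟪A x, y⟫ = Complex.re ⟪A y, x⟫)
    (h : ∀ x : E, |Complex.re ⟪A x, x⟫| ≤ C * ‖x‖ ^ 2) : ‖A‖ ≤ C := by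
  have key : ∀ x y : E, Complex.re ⟪A x, y⟫ ≤ C / 2 * (‖x‖ ^ 2 + ‖y‖ ^ 2) := by
    intro x y
    have expand : Complex.re ⟪A (x + y), x + y⟫ - Complex.re ⟪A (x - y), x - y⟫
        = 4 * Complex.re ⟪A x, y⟫ := by
      have hs := hsym x y
      simp only [map_add, map_sub, inner_add_left, inner_add_right, inner_sub_left,
        inner_sub_right, Complex.add_re, Complex.sub_re]
      linarith
    have e1 := abs_le.mp (h (x + y))
    have e2 := abs_le.mp (h (x - y))
    have hpar : ‖x + y‖ ^ 2 + ‖x - y‖ ^ 2 = 2 * (‖x‖ ^ 2 + ‖y‖ ^ 2) := by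
      have := parallelogram_law_with_norm ℂ x y
      ring_nf; ring_nf at this; linarith
    nlinarith [e1.2, e2.1]
  refine A.opNorm_le_bound hC fun x => ?_
  rcases eq_or_ne (A x) 0 with hAx | hAx
  · simp [hAx]; positivity
  rcases eq_or_ne x 0 with hx | hx
  · simp [hx]
  have hAxn : (0:ℝ) < ‖A x‖ := norm_pos_iff.mpr hAx
  have hxn : (0:ℝ) < ‖x‖ := norm_pos_iff.mpr hx
  set r : ℝ := ‖x‖ / ‖A x‖ with hr
  have hk := key x ((r : ℂ) • A x)
  have hre : Complex.re ⟪A x, (r : ℂ) • A x⟫ = r * ‖A x‖ ^ 2 := by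
    rw [inner_smul_right, inner_self_eq_norm_sq_to_K]
    simp [← Complex.ofReal_pow, ← Complex.ofReal_mul]
  have hny : ‖(r : ℂ) • A x‖ = ‖x‖ := by
    rw [norm_smul]
    simp only [Complex.norm_real, Real.norm_eq_abs, abs_of_pos (by positivity : (0:ℝ) < r)]
    rw [hr, div_mul_cancel₀ _ (ne_of_gt hAxn)]
  rw [hre, hny] at hk
  have : ‖A x‖ * ‖x‖ ≤ C * ‖x‖ ^ 2 := by
    have hrv : r * ‖A x‖ ^ 2 = ‖x‖ * ‖A x‖ := by rw [hr, pow_two, ← mul_assoc, div_mul_cancel₀ _ (ne_of_gt hAxn)]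
    nlinarith
  calc ‖A x‖ = (‖A x‖ * ‖x‖) / ‖x‖ := by field_simp
  _ ≤ (C * ‖x‖ ^ 2) / ‖x‖ := by gcongr
  _ = C * ‖x‖ := by field_simp


lemma star_Bmat (b : ℕ → ℂ) : star (Bmat n b) = -(Bmat n b) := by
  rw [Matrix.star_eq_conjTranspose]
  ext i j
  simp only [Matrix.conjTranspose_apply, Bmat, Matrix.of_apply, Matrix.neg_apply]
  split_ifs with h1 h2 <;> simp_all <;> omega

lemma norm_Bmat_le (b : ℕ → ℂ) (C : ℝ) (hC : 0 ≤ C)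
    (h : ∀ x : EuclideanSpace ℂ (Fin n),
      ‖⟪x, (Matrix.toEuclideanCLM (𝕜 := ℂ) (Bmat n b)) x⟫‖ ≤ C * ‖x‖ ^ 2) :
    opNorm (Bmat n b) ≤ C := by
  rw [opNorm_eq]
  set T := Matrix.toEuclideanCLM (𝕜 := ℂ) (Bmat n b) with hT
  have hstar : star T = -T := by
    rw [hT, ← map_star, star_Bmat, map_neg]
  have hadj : ∀ x y : EuclideanSpace ℂ (Fin n), ⟪T y, x⟫ = -(starRingEnd ℂ) ⟪T x, y⟫ := by
    intro x y
    have h1 : ⟪T y, x⟫ = -⟪y, T x⟫ := by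
      rw [← ContinuousLinearMap.adjoint_inner_left, ← ContinuousLinearMap.star_eq_adjoint,
        hstar]
      simp
    rw [h1, ← inner_conj_symm]
  have hnorm : ‖T‖ = ‖Complex.I • T‖ := by
    rw [norm_smul Complex.I T]; simp
  rw [hnorm]
  refine norm_le_of_sym (Complex.I • T) C hC ?_ ?_
  · intro x y
    have e1 : ⟪(Complex.I • T) x, y⟫ = -Complex.I * ⟪T x, y⟫ := by
      simp [inner_smul_left, Complex.conj_I]; ring
    have e2 : ⟪(Complex.I • T) y, x⟫ = -Complex.I * ⟪T y, x⟫ := by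
      simp [inner_smul_left, Complex.conj_I]; ring
    rw [e1, e2, hadj x y]
    set z : ℂ := ⟪T x, y⟫ with hz
    simp [Complex.mul_re]
  · intro x
    have e1 : ⟪(Complex.I • T) x, x⟫ = -Complex.I * ⟪T x, x⟫ := by
      simp [inner_smul_left, Complex.conj_I]; ring
    have := h x
    have hxx : ‖⟪T x, x⟫‖ = ‖⟪x, T x⟫‖ := by
      rw [← inner_conj_symm]
      exact RCLike.norm_conj _
    calc |Complex.re ⟪(Complex.I • T) x, x⟫| ≤ ‖⟪(Complex.I • T) x, x⟫‖ := Complex.abs_re_le_norm _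
    _ = ‖⟪T x, x⟫‖ := by rw [e1]; simp
    _ ≤ C * ‖x‖ ^ 2 := by rw [hxx]; exact h x

lemma pad_vec_eq (g : ℕ → ℂ) (m : ℕ) : pad (vec n g) m = if m < n then g m else 0 := by
  by_cases h : m < n
  · simp [pad_vec g m h, h]
  · simp [pad, h]

lemma opNorm_nonneg (M : Matrix (Fin n) (Fin n) ℂ) : 0 ≤ opNorm M := by
  rw [opNorm_eq]; exact norm_nonneg _

lemma inner_le (b : ℕ → ℂ) (x y : EuclideanSpace ℂ (Fin n)) :
    ‖⟪x, (Matrix.toEuclideanCLM (𝕜 := ℂ) (Bmat n b)) y⟫‖ ≤ ‖x‖ * (opNorm (Bmat n b) * ‖y‖) := by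
  rw [opNorm_eq]
  exact le_trans (norm_inner_le_norm _ _)
    (by gcongr; exact ContinuousLinearMap.le_opNorm _ y)

lemma part1 (hn : 3 ≤ n) (b : ℕ → ℂ) (k : ℕ) (hk : k < n - 2) :
    Real.sqrt (‖b k‖ ^ 2 + ‖b (k + 1)‖ ^ 2) ≤ opNorm (Bmat n b) := by
  classical
  have hk2 : k + 2 < n := by omega
  have hk1 : k + 1 < n - 1 := by omega
  set gx : ℕ → ℂ := fun m => if m = k then b k else if m = k + 2 then -(starRingEnd ℂ) (b (k+1)) else 0 with hgx
  set gy : ℕ → ℂ := fun m => if m = k + 1 then (1:ℂ) else 0 with hgy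
  set a : ℝ := ‖b k‖ ^ 2 + ‖b (k + 1)‖ ^ 2 with ha
  have hS1 : (∑ m ∈ range (n - 1), b m * (starRingEnd ℂ) (pad (vec n gx) m) * pad (vec n gy) (m + 1))
      = b k * (starRingEnd ℂ) (b k) := by
    rw [Finset.sum_eq_single k]
    · simp [pad_vec_eq, hgx, hgy, (by omega : k < n), hk2, (by omega : k + 1 < n)]
    · intro m hm hmk
      have : pad (vec n gy) (m + 1) = 0 := by
        simp only [pad_vec_eq, hgy]
        split_ifs <;> simp_all
      rw [this, mul_zero]
    · intro h
      exact absurd (mem_range.mpr (by omega)) h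
  have hS2 : (∑ m ∈ range (n - 1), (starRingEnd ℂ) (b m) * (starRingEnd ℂ) (pad (vec n gx) (m + 1)) * pad (vec n gy) m)
      = -((starRingEnd ℂ) (b (k+1)) * b (k+1)) := by
    rw [Finset.sum_eq_single (k+1)]
    · have e1 : pad (vec n gx) (k + 1 + 1) = -(starRingEnd ℂ) (b (k+1)) := by
        simp [pad_vec_eq, hk2, hgx, (by omega : k + 1 + 1 < n), (by omega : ¬ (k + 1 + 1 = k)),
          (by omega : k + 1 + 1 = k + 2)]
      have e2 : pad (vec n gy) (k+1) = 1 := by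
        simp [pad_vec_eq, (by omega : k + 1 < n), hgy]
      rw [e1, e2, map_neg, Complex.conj_conj]
      ring
    · intro m hm hmk
      have : pad (vec n gy) m = 0 := by
        simp only [pad_vec_eq, hgy]
        split_ifs <;> simp_all
      rw [this, mul_zero]
    · intro h
      exact absurd (mem_range.mpr hk1) h
  have hval : ⟪vec n gx, (Matrix.toEuclideanCLM (𝕜 := ℂ) (Bmat n b)) (vec n gy)⟫ = (a : ℂ) := by
    rw [inner_key, hS1, hS2, sub_neg_eq_add, ha]
    rw [Complex.mul_conj, mul_comm ((starRingEnd ℂ) (b (k+1))) (b (k+1)), Complex.mul_conj]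
    push_cast [Complex.normSq_eq_norm_sq]
    ring
  have hax : ‖vec n gx‖ ^ 2 = a := by
    rw [norm_sq_eq]
    have : ∀ m ∈ range n, ‖pad (vec n gx) m‖ ^ 2
        = (if m = k then ‖b k‖ ^ 2 else 0) + (if m = k + 2 then ‖b (k+1)‖ ^ 2 else 0) := by
      intro m hm
      simp only [pad_vec_eq, mem_range.mp hm, if_pos, hgx]
      split_ifs <;> simp_all <;> omega
    rw [Finset.sum_congr rfl this, Finset.sum_add_distrib,
      Finset.sum_ite_eq' (range n) k, Finset.sum_ite_eq' (range n) (k+2)]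
    simp [(by omega : k < n), hk2, ha]
  have hay : ‖vec n gy‖ ^ 2 = 1 := by
    rw [norm_sq_eq]
    have : ∀ m ∈ range n, ‖pad (vec n gy) m‖ ^ 2 = (if m = k + 1 then (1:ℝ) else 0) := by
      intro m hm
      simp only [pad_vec_eq, mem_range.mp hm, if_pos, hgy]
      split_ifs <;> simp_all
    rw [Finset.sum_congr rfl this, Finset.sum_ite_eq' (range n) (k+1)]
    simp [(by omega : k + 1 < n)]
  have hy1 : ‖vec n gy‖ = 1 := by
    nlinarith [norm_nonneg (vec n gy)]
  have hxa : ‖vec n gx‖ = Real.sqrt a := by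
    rw [← hax, Real.sqrt_sq (norm_nonneg (vec n gx))]
  have h0a : 0 ≤ a := by positivity
  have hfin := inner_le b (vec n gx) (vec n gy)
  rw [hval, hy1, hxa] at hfin
  have hnc : ‖(a:ℂ)‖ = a := by
    rw [Complex.norm_real, Real.norm_eq_abs, abs_of_nonneg h0a]
  rw [hnc, mul_one] at hfin
  rcases eq_or_lt_of_le h0a with h | h
  · rw [← h]; simpa using opNorm_nonneg (Bmat n b)
  · have hs : 0 < Real.sqrt a := Real.sqrt_pos.mpr h
    nlinarith [Real.mul_self_sqrt h0a]

noncomputable def uvec (b : ℕ → ℂ) : ℕ → ℂ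
  | 0 => 1
  | m + 1 => Complex.I * uvec b m * (if b m = 0 then 1 else (starRingEnd ℂ) (b m) / (‖b m‖ : ℂ))

lemma uvec_norm (b : ℕ → ℂ) : ∀ m, ‖uvec b m‖ = 1 := by
  intro m
  induction m with
  | zero => simp [uvec]
  | succ m ih =>
    by_cases h : b m = 0
    · simp [uvec, h, ih]
    · have : ‖b m‖ ≠ 0 := by simpa using h
      simp [uvec, h, ih, norm_div, this]

lemma uvec_step (b : ℕ → ℂ) (m : ℕ) :
    b m * (starRingEnd ℂ) (uvec b m) * uvec b (m + 1) = Complex.I * (‖b m‖ : ℂ) := by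
  have h1 : uvec b m * (starRingEnd ℂ) (uvec b m) = 1 := by
    rw [mul_comm, Complex.conj_mul']
    norm_cast
    simp [uvec_norm b m]
  by_cases h : b m = 0
  · simp [uvec, h]
  · have hb : (‖b m‖ : ℂ) ≠ 0 := by simpa using h
    have h2 : b m * (starRingEnd ℂ) (b m) = ((‖b m‖ : ℂ)) ^ 2 := by
      rw [Complex.mul_conj, Complex.normSq_eq_norm_sq]
      push_cast
      ring
    show b m * (starRingEnd ℂ) (uvec b m) * (Complex.I * uvec b m * _) = _
    rw [if_neg h]
    calc b m * (starRingEnd ℂ) (uvec b m) *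
          (Complex.I * uvec b m * ((starRingEnd ℂ) (b m) / (‖b m‖ : ℂ)))
        = Complex.I * (uvec b m * (starRingEnd ℂ) (uvec b m)) *
            (b m * (starRingEnd ℂ) (b m)) / (‖b m‖ : ℂ) := by ring
    _ = Complex.I * (‖b m‖ : ℂ) ^ 2 / (‖b m‖ : ℂ) := by rw [h1, h2]; ring
    _ = Complex.I * (‖b m‖ : ℂ) := by
        rw [pow_two, mul_div_assoc, mul_div_assoc, div_self hb, mul_one]
  
lemma part2 (hn : 3 ≤ n) (b : ℕ → ℂ) :
    2 / (n : ℝ) * ∑ i ∈ Finset.range (n - 1), ‖b i‖ ≤ opNorm (Bmat n b) := by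
  classical
  set R : ℝ := ∑ i ∈ Finset.range (n - 1), ‖b i‖ with hR
  have hR0 : 0 ≤ R := Finset.sum_nonneg fun _ _ => norm_nonneg _
  set x := vec n (uvec b) with hx
  have hS1 : (∑ m ∈ range (n - 1), b m * (starRingEnd ℂ) (pad x m) * pad x (m + 1))
      = Complex.I * (R : ℂ) := by
    have : ∀ m ∈ range (n - 1), b m * (starRingEnd ℂ) (pad x m) * pad x (m + 1)
        = Complex.I * (‖b m‖ : ℂ) := by
      intro m hm
      have hm' := mem_range.mp hm
      rw [hx, pad_vec _ _ (by omega), pad_vec _ _ (by omega)]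
      exact uvec_step b m
    rw [Finset.sum_congr rfl this, ← Finset.mul_sum, hR]
    push_cast
    ring
  have hS2 : (∑ m ∈ range (n - 1), (starRingEnd ℂ) (b m) * (starRingEnd ℂ) (pad x (m + 1)) * pad x m)
      = (starRingEnd ℂ) (Complex.I * (R : ℂ)) := by
    rw [← hS1, map_sum]
    refine Finset.sum_congr rfl fun m _ => ?_
    simp only [map_mul, Complex.conj_conj]
    ring
  have hval : ⟪x, (Matrix.toEuclideanCLM (𝕜 := ℂ) (Bmat n b)) x⟫ = 2 * Complex.I * (R : ℂ) := by
    rw [inner_key, hS1, hS2]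
    simp [Complex.ext_iff]
    ring
  have hnx : ‖x‖ ^ 2 = (n : ℝ) := by
    rw [norm_sq_eq]
    have : ∀ m ∈ range n, ‖pad x m‖ ^ 2 = 1 := by
      intro m hm
      rw [hx, pad_vec _ _ (mem_range.mp hm), uvec_norm b m]
      norm_num
    rw [Finset.sum_congr rfl this]
    simp
  have hfin := inner_le b x x
  rw [hval] at hfin
  have hnv : ‖2 * Complex.I * (R : ℂ)‖ = 2 * R := by
    simp [norm_mul, abs_of_nonneg hR0]
  rw [hnv] at hfin
  have hxx : ‖x‖ * (opNorm (Bmat n b) * ‖x‖) = (n : ℝ) * opNorm (Bmat n b) := by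
    rw [mul_comm (opNorm (Bmat n b)) ‖x‖, ← mul_assoc, ← pow_two, hnx]
  rw [hxx] at hfin
  have hn0 : (0:ℝ) < (n : ℝ) := by positivity -- wrong if n = 0, but n ≥ 3
  rw [div_mul_eq_mul_div, div_le_iff₀ hn0]
  linarith

lemma pieceA (b : ℕ → ℂ) (x : EuclideanSpace ℂ (Fin n)) :
    ‖⟪x, (Matrix.toEuclideanCLM (𝕜 := ℂ) (Bmat n b)) x⟫‖ ≤
      ∑ m ∈ range (n - 1), 2 * ‖b m‖ * ‖pad x m‖ * ‖pad x (m + 1)‖ := by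
  rw [inner_key]
  refine le_trans (norm_sub_le _ _) ?_
  refine le_trans (add_le_add (norm_sum_le _ _) (norm_sum_le _ _)) ?_
  rw [← Finset.sum_add_distrib]
  refine Finset.sum_le_sum fun m _ => ?_
  simp only [norm_mul, RCLike.norm_conj]
  ring_nf
  nlinarith [norm_nonneg (b m), norm_nonneg (pad x m), norm_nonneg (pad x (m+1))]

lemma sum_shift_bound (hn : 3 ≤ n) (s α β : ℕ → ℝ) (C : ℝ)
    (h0 : α 0 ≤ C) (hlast : β (n - 2) ≤ C)
    (hmid : ∀ j, 1 ≤ j → j < n - 1 → α j + β (j - 1) ≤ C) :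
    ∑ m ∈ range (n - 1), (α m * s m ^ 2 + β m * s (m + 1) ^ 2) ≤ C * ∑ j ∈ range n, s j ^ 2 := by
  rw [Finset.sum_add_distrib]
  have eqA : ∑ m ∈ range (n - 1), α m * s m ^ 2
      = ∑ j ∈ range n, (if j < n - 1 then α j * s j ^ 2 else 0) := by
    rw [Finset.sum_congr rfl (fun m hm => (if_pos (mem_range.mp hm)).symm)]
    exact Finset.sum_subset (Finset.range_subset_range.mpr (by omega))
      (fun j _ hj => if_neg (by simp only [mem_range] at hj; omega))
  have eqB : ∑ m ∈ range (n - 1), β m * s (m + 1) ^ 2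
      = ∑ j ∈ range n, (if j = 0 then 0 else β (j - 1) * s j ^ 2) := by
    obtain ⟨p, hp⟩ : ∃ p, n = p + 1 := ⟨n - 1, by omega⟩
    subst hp
    rw [Finset.sum_range_succ' (fun j => if j = 0 then 0 else β (j - 1) * s j ^ 2) p]
    simp
  rw [eqA, eqB, ← Finset.sum_add_distrib, Finset.mul_sum]
  refine Finset.sum_le_sum fun j hj => ?_
  have hjn := mem_range.mp hj
  have hs2 : (0:ℝ) ≤ s j ^ 2 := sq_nonneg _
  rcases Nat.eq_zero_or_pos j with hj0 | hj1
  · subst hj0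
    rw [if_pos (by omega : 0 < n - 1), if_pos rfl, add_zero]
    exact mul_le_mul_of_nonneg_right h0 hs2
  rcases eq_or_lt_of_le (Nat.succ_le_of_lt hjn) with hlt | hlt
  · -- j = n - 1
    have hj' : j = n - 1 := by omega
    rw [if_neg (by omega), if_neg (by omega), zero_add, hj']
    have : (n:ℕ) - 1 - 1 = n - 2 := by omega
    rw [this]
    exact mul_le_mul_of_nonneg_right hlast (sq_nonneg _)
  · -- middle
    rw [if_pos (by omega), if_neg (by omega)]
    have := hmid j (by omega) (by omega)
    nlinarith [sq_nonneg (s j)]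

lemma part3 (hn : 3 ≤ n) (b : ℕ → ℂ) (hne : (Finset.range (n-2)).Nonempty) :
    opNorm (Bmat n b) ≤
      (Finset.range (n - 2)).sup' hne (fun i => ‖b i‖ + ‖b (i + 1)‖) := by
  set c := (Finset.range (n - 2)).sup' hne (fun i => ‖b i‖ + ‖b (i + 1)‖) with hc
  have hm0 : (0:ℕ) ∈ range (n-2) := mem_range.mpr (by omega)
  have hc0 : 0 ≤ c := le_trans (by positivity) (Finset.le_sup' (fun i => ‖b i‖ + ‖b (i + 1)‖) hm0)
  refine norm_Bmat_le b c hc0 fun x => ?_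
  set s : ℕ → ℝ := fun m => ‖pad x m‖ with hs
  calc ‖⟪x, (Matrix.toEuclideanCLM (𝕜 := ℂ) (Bmat n b)) x⟫‖
      ≤ ∑ m ∈ range (n - 1), 2 * ‖b m‖ * s m * s (m + 1) := pieceA b x
  _ ≤ ∑ m ∈ range (n - 1), (‖b m‖ * s m ^ 2 + ‖b m‖ * s (m + 1) ^ 2) := by
      refine Finset.sum_le_sum fun m _ => ?_
      nlinarith [sq_nonneg (s m - s (m + 1)), norm_nonneg (b m), sq_nonneg (s m + s (m+1))]
  _ ≤ c * ∑ j ∈ range n, s j ^ 2 := by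
      refine sum_shift_bound hn s _ _ c ?_ ?_ ?_
      · exact le_trans (le_add_of_nonneg_right (norm_nonneg _))
          (Finset.le_sup' (fun i => ‖b i‖ + ‖b (i + 1)‖) hm0)
      · have hm : (n - 3 : ℕ) ∈ range (n - 2) := mem_range.mpr (by omega)
        have := Finset.le_sup' (fun i => ‖b i‖ + ‖b (i + 1)‖) hm
        have e : n - 3 + 1 = n - 2 := by omega
        rw [e] at this
        exact le_trans (le_add_of_nonneg_left (norm_nonneg _)) this
      · intro j hj1 hjn
        have hm : (j - 1 : ℕ) ∈ range (n - 2) := mem_range.mpr (by omega)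
        have := Finset.le_sup' (fun i => ‖b i‖ + ‖b (i + 1)‖) hm
        have e : j - 1 + 1 = j := by omega
        rw [e] at this
        linarith
  _ = c * ‖x‖ ^ 2 := by rw [norm_sq_eq]

lemma part4 (hn : 3 ≤ n) (b : ℕ → ℂ) (hne : (Finset.range (n-1)).Nonempty) :
    opNorm (Bmat n b) ≤
      2 * Real.cos (Real.pi / ((n : ℝ) + 1)) * (Finset.range (n - 1)).sup' hne (fun i => ‖b i‖) := by
  set θ : ℝ := Real.pi / ((n : ℝ) + 1) with hθ
  set M := (Finset.range (n - 1)).sup' hne (fun i => ‖b i‖) with hM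
  have hm0 : (0:ℕ) ∈ range (n-1) := mem_range.mpr (by omega)
  have hM0 : 0 ≤ M := le_trans (norm_nonneg (b 0)) (Finset.le_sup' (fun i => ‖b i‖) hm0)
  have hn1 : (0:ℝ) < (n:ℝ) + 1 := by positivity
  have hθpos : 0 < θ := by rw [hθ]; positivity
  have hcos : 0 ≤ Real.cos θ := by
    apply Real.cos_nonneg_of_mem_Icc
    constructor
    · nlinarith [hθpos, Real.pi_pos]
    · rw [hθ, div_le_iff₀ hn1]
      have : (3:ℝ) ≤ (n:ℝ) := by exact_mod_cast hn
      nlinarith [Real.pi_pos]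
  have hC0 : 0 ≤ 2 * Real.cos θ * M := by positivity
  -- positivity of the relevant sines
  have hsin : ∀ k : ℕ, 1 ≤ k → k ≤ n → 0 < Real.sin ((k:ℝ) * θ) := by
    intro k hk1 hkn
    apply Real.sin_pos_of_pos_of_lt_pi
    · have : (1:ℝ) ≤ (k:ℝ) := by exact_mod_cast hk1
      nlinarith [hθpos]
    · rw [hθ, mul_div_assoc'] at *
      rw [div_lt_iff₀ hn1]
      have : (k:ℝ) ≤ (n:ℝ) := by exact_mod_cast hkn
      nlinarith [Real.pi_pos]
  have hπ : ((n:ℝ) + 1) * θ = Real.pi := by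
    rw [hθ, mul_div_cancel₀ _ (ne_of_gt hn1)]
  refine norm_Bmat_le b _ hC0 fun x => ?_
  set s : ℕ → ℝ := fun m => ‖pad x m‖ with hs
  have hs0 : ∀ m, 0 ≤ s m := fun m => norm_nonneg _
  set α : ℕ → ℝ := fun m => M * (Real.sin (((m:ℝ) + 2) * θ) / Real.sin (((m:ℝ) + 1) * θ)) with hα
  set β : ℕ → ℝ := fun m => M * (Real.sin (((m:ℝ) + 1) * θ) / Real.sin (((m:ℝ) + 2) * θ)) with hβ
  calc ‖⟪x, (Matrix.toEuclideanCLM (𝕜 := ℂ) (Bmat n b)) x⟫‖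
      ≤ ∑ m ∈ range (n - 1), 2 * ‖b m‖ * s m * s (m + 1) := pieceA b x
  _ ≤ ∑ m ∈ range (n - 1), (α m * s m ^ 2 + β m * s (m + 1) ^ 2) := by
      refine Finset.sum_le_sum fun m hm => ?_
      have hmn := mem_range.mp hm
      have hbM : ‖b m‖ ≤ M := Finset.le_sup' (fun i => ‖b i‖) hm
      have hp : 0 < Real.sin (((m:ℝ) + 1) * θ) := by
        have := hsin (m+1) (by omega) (by omega); push_cast at this ⊢; convert this using 3 <;> ring
      have hq : 0 < Real.sin (((m:ℝ) + 2) * θ) := by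
        have := hsin (m+2) (by omega) (by omega); push_cast at this ⊢; convert this using 3 <;> ring
      have key : 2 * s m * s (m + 1) ≤
          Real.sin (((m:ℝ) + 2) * θ) / Real.sin (((m:ℝ) + 1) * θ) * s m ^ 2 +
          Real.sin (((m:ℝ) + 1) * θ) / Real.sin (((m:ℝ) + 2) * θ) * s (m + 1) ^ 2 := by
        rw [div_mul_eq_mul_div, div_mul_eq_mul_div, div_add_div _ _ (ne_of_gt hp) (ne_of_gt hq),
          le_div_iff₀ (by positivity)]
        nlinarith [sq_nonneg (Real.sin (((m:ℝ) + 2) * θ) * s m - Real.sin (((m:ℝ) + 1) * θ) * s (m + 1))]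
      have hss : 0 ≤ s m * s (m + 1) := mul_nonneg (hs0 m) (hs0 (m+1))
      rw [hα, hβ]
      simp only
      nlinarith [key, hss, mul_le_mul_of_nonneg_right hbM hss]
  _ ≤ (2 * Real.cos θ * M) * ∑ j ∈ range n, s j ^ 2 := by
      refine sum_shift_bound hn s α β _ ?_ ?_ ?_
      · -- α 0 = M * sin(2θ)/sin(θ) = 2 cos θ M
        rw [hα]
        simp only [Nat.cast_zero, zero_add, one_mul]
        have hp : 0 < Real.sin θ := by
          have := hsin 1 (le_refl 1) (by omega); push_cast at this; rw [one_mul] at this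
          exact this
        have : Real.sin (2 * θ) / Real.sin θ = 2 * Real.cos θ := by
          rw [Real.sin_two_mul]; field_simp
        rw [this]
        nlinarith [hM0]
      · -- β (n-2) = M * sin((n-1)θ)/sin(nθ) = 2 cos θ M
        rw [hβ]
        simp only
        have e : ((n - 2 : ℕ) : ℝ) = (n:ℝ) - 2 := by
          push_cast [Nat.cast_sub (by omega : 2 ≤ n)]; ring
        rw [e]
        have e1 : ((n:ℝ) - 2 + 1) = (n:ℝ) - 1 := by ring
        have e2 : ((n:ℝ) - 2 + 2) = (n:ℝ) := by ring
        rw [e1, e2]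
        have hp : 0 < Real.sin ((n:ℝ) * θ) := by
          have := hsin n (by omega) (le_refl n); exact this
        have h0 : Real.sin ((n:ℝ) * θ + θ) = 0 := by
          rw [show (n:ℝ)*θ + θ = ((n:ℝ)+1)*θ by ring, hπ, Real.sin_pi]
        rw [Real.sin_add] at h0
        have key : Real.sin (((n:ℝ) - 1) * θ) = 2 * Real.cos θ * Real.sin ((n:ℝ) * θ) := by
          rw [show ((n:ℝ)-1)*θ = (n:ℝ)*θ - θ by ring, Real.sin_sub]
          linarith
        rw [key, mul_div_assoc, div_self (ne_of_gt hp), mul_one]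
        exact le_of_eq (by ring)
      · -- middle coefficients
        intro j hj1 hjn
        rw [hα, hβ]
        simp only
        have e : ((j - 1 : ℕ) : ℝ) = (j:ℝ) - 1 := by
          push_cast [Nat.cast_sub (by omega : 1 ≤ j)]; ring
        rw [e]
        have e1 : ((j:ℝ) - 1 + 1) = (j:ℝ) := by ring
        have e2 : ((j:ℝ) - 1 + 2) = (j:ℝ) + 1 := by ring
        rw [e1, e2]
        have hp : 0 < Real.sin (((j:ℝ) + 1) * θ) := by
          have := hsin (j+1) (by omega) (by omega); push_cast at this; exact this
        have key : Real.sin (((j:ℝ)+2)*θ) + Real.sin ((j:ℝ)*θ)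
            = 2 * Real.cos θ * Real.sin (((j:ℝ)+1)*θ) := by
          rw [show ((j:ℝ)+2)*θ = ((j:ℝ)+1)*θ + θ by ring,
            show (j:ℝ)*θ = ((j:ℝ)+1)*θ - θ by ring, Real.sin_add, Real.sin_sub]
          ring
        have comb : M * (Real.sin (((j:ℝ)+2)*θ) / Real.sin (((j:ℝ)+1)*θ))
            + M * (Real.sin ((j:ℝ)*θ) / Real.sin (((j:ℝ)+1)*θ))
            = M * ((Real.sin (((j:ℝ)+2)*θ) + Real.sin ((j:ℝ)*θ)) / Real.sin (((j:ℝ)+1)*θ)) := by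
          ring
        rw [comb, key, mul_div_assoc, div_self (ne_of_gt hp), mul_one]
        exact le_of_eq (by ring)
  _ = (2 * Real.cos θ * M) * ‖x‖ ^ 2 := by rw [norm_sq_eq]

end Stmt17

theorem stmt17 {n : ℕ} (hn : 3 ≤ n) (b : ℕ → ℂ) :
    ((Finset.range (n - 2)).sup' (by simp; omega)
        (fun i => Real.sqrt (‖b i‖ ^ 2 + ‖b (i + 1)‖ ^ 2)) ≤ opNorm (Bmat n b)) ∧
    ((2 / (n : ℝ)) * ∑ i ∈ Finset.range (n - 1), ‖b i‖ ≤ opNorm (Bmat n b)) ∧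
    (opNorm (Bmat n b) ≤
      (Finset.range (n - 2)).sup' (by simp; omega) (fun i => ‖b i‖ + ‖b (i + 1)‖)) ∧
    (opNorm (Bmat n b) ≤
      2 * Real.cos (Real.pi / ((n : ℝ) + 1)) *
        (Finset.range (n - 1)).sup' (by simp; omega) (fun i => ‖b i‖)) := by
  refine ⟨?_, Stmt17.part2 hn b, Stmt17.part3 hn b _, Stmt17.part4 hn b _⟩
  apply Finset.sup'_le
  intro k hk
  exact Stmt17.part1 hn b k (Finset.mem_range.mp hk)
end

section
/- Let n ≥ 2, let w₁,…,w_{n−1} > 0, and let C be the chain with these weights on vertices 1,…,n, with noncommutative length λ(C) = d^D(1,n) and geodesic length ℓ(C) = Σ_{i=1}^{n−1} w_i. Then ℓ(C)/(2·cos(π/(n+1))) ≤ λ(C) ≤ (n/2)·max_{1≤i≤n−1} w_i. -/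
open scoped ENNReal

/-- The commutator `[D, π(a)]` of a matrix with the diagonal matrix of `a`. -/
noncomputable def commD {ι : Type*} [Finite ι] (D : Matrix ι ι ℂ) (a : ι → ℂ) : Matrix ι ι ℂ :=
  letI := Fintype.ofFinite ι
  letI := Classical.decEq ι
  D * Matrix.diagonal a - Matrix.diagonal a * D

/-- Connes' noncommutative distance associated to the Dirac operator `D`. -/
noncomputable def ncDist {ι : Type*} [Finite ι] (D : Matrix ι ι ℂ) (i j : ι) : ℝ≥0∞ :=
  ⨆ (a : ι → ℂ) (_ : opNorm (commD D a) ≤ 1), ENNReal.ofReal ‖a i - a j‖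

/-- The weight of an edge: the inverse of `|D i j|` (infinite if `D i j = 0`). -/
noncomputable def eWeight {ι : Type*} (D : Matrix ι ι ℂ) (u v : ι) : ℝ≥0∞ :=
  (ENNReal.ofReal ‖D u v‖)⁻¹

/-- Adjacency in the graph `G_D`. -/
def Adjac {ι : Type*} (D : Matrix ι ι ℂ) (u v : ι) : Prop := u ≠ v ∧ D u v ≠ 0

/-- The length of a walk `i :: p` computed with weights `eWeight D`. -/
noncomputable def walkLength {ι : Type*} (D : Matrix ι ι ℂ) : ι → List ι → ℝ≥0∞
  | _, [] => 0
  | u, v :: rest => eWeight D u v + walkLength D v rest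

/-- `i :: p` is a walk from `i` to `j` in the graph `G_D`. -/
def IsWalk {ι : Type*} (D : Matrix ι ι ℂ) (i j : ι) (p : List ι) : Prop :=
  List.Chain (Adjac D) i p ∧ (i :: p).getLast (List.cons_ne_nil _ _) = j

/-- `i` and `j` lie in the same connected component of `G_D`. -/
def Conn {ι : Type*} (D : Matrix ι ι ℂ) (i j : ι) : Prop := ∃ p, IsWalk D i j p

/-- The geodesic (weighted shortest-path) distance on `G_D`. -/
noncomputable def gDist {ι : Type*} (D : Matrix ι ι ℂ) (i j : ι) : ℝ≥0∞ :=
  ⨅ (p : List ι) (_ : IsWalk D i j p), walkLength D i p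


/-- The Dirac operator of the chain (weighted path graph) on `n` vertices with
weights `w 0, …, w (n-2)`. -/
noncomputable def chainD (n : ℕ) (w : ℕ → ℝ) : Matrix (Fin n) (Fin n) ℂ :=
  Matrix.of fun i j =>
    if (i : ℕ) + 1 = (j : ℕ) then (((w (i : ℕ))⁻¹ : ℝ) : ℂ)
    else if (j : ℕ) + 1 = (i : ℕ) then (((w (j : ℕ))⁻¹ : ℝ) : ℂ)
    else 0


open Finset Real

section RealCore
variable (n : ℕ)

noncomputable def tht (n : ℕ) : ℝ := Real.pi / (n + 1)
noncomputable def sn (n : ℕ) (j : ℕ) : ℝ := Real.sin (j * tht n)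

lemma tht_pos : 0 < tht n := by
  have : (0:ℝ) < (n:ℝ) + 1 := by positivity
  exact div_pos Real.pi_pos this

lemma sn_zero : sn n 0 = 0 := by simp [sn]

lemma sn_top : sn n (n + 1) = 0 := by
  have : ((n:ℝ) + 1) * tht n = Real.pi := by
    unfold tht; field_simp
  simp only [sn]
  push_cast
  rw [this, Real.sin_pi]

lemma sn_pos {j : ℕ} (h1 : 1 ≤ j) (h2 : j ≤ n) : 0 < sn n j := by
  apply Real.sin_pos_of_pos_of_lt_pi
  · have := tht_pos n
    have : (0:ℝ) < j := by exact_mod_cast h1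
    positivity
  · have hj : (j:ℝ) < (n:ℝ) + 1 := by exact_mod_cast Nat.lt_succ_of_le h2
    have h := tht_pos n
    calc (j:ℝ) * tht n < ((n:ℝ)+1) * tht n := by
          exact mul_lt_mul_of_pos_right hj h
      _ = Real.pi := by unfold tht; field_simp

lemma sn_rec (j : ℕ) : sn n j + sn n (j + 2) = 2 * Real.cos (tht n) * sn n (j+1) := by
  have : ((j:ℝ)+2) * tht n = ((j:ℝ)+1) * tht n + tht n := by ring
  have h2 : (j:ℝ) * tht n = ((j:ℝ)+1) * tht n - tht n := by ring
  simp only [sn]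
  push_cast
  rw [this, h2, Real.sin_add, Real.sin_sub]
  ring

lemma amgm (r a b : ℝ) (hr : 0 < r) : a * b ≤ (r * a^2 + r⁻¹ * b^2)/2 := by
  have h := sq_nonneg (r * a - b)
  have h2 : r * r⁻¹ = 1 := mul_inv_cancel₀ hr.ne'
  nlinarith [sq_nonneg (r*a-b), mul_pos hr hr]

lemma collect (hn : 1 ≤ n) (f : ℕ → ℝ) (hf : ∀ j, 0 ≤ f j) :
    ∑ j ∈ range (n-1), (sn n (j+2) / sn n (j+1) * f (j+1) + sn n (j+1) / sn n (j+2) * f (j+2))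
      ≤ 2 * Real.cos (tht n) * ∑ j ∈ range n, f (j+1) := by
  rw [Finset.sum_add_distrib]
  have hA : ∑ j ∈ range (n-1), sn n (j+2) / sn n (j+1) * f (j+1)
      ≤ ∑ j ∈ range n, sn n (j+2) / sn n (j+1) * f (j+1) := by
    apply Finset.sum_le_sum_of_subset_of_nonneg (Finset.range_subset_range.2 (by omega))
    intro i hi hi'
    simp only [Finset.mem_range] at hi hi'
    have : i = n - 1 := by omega
    subst this
    have hn1 : n - 1 + 2 = n + 1 := by omega
    rw [hn1, sn_top]
    simp
  have hB : ∑ j ∈ range (n-1), sn n (j+1) / sn n (j+2) * f (j+2)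
      ≤ ∑ j ∈ range n, sn n j / sn n (j+1) * f (j+1) := by
    have hrw : ∑ j ∈ range n, sn n j / sn n (j+1) * f (j+1)
        = (∑ j ∈ range (n-1), sn n (j+1) / sn n (j+2) * f (j+2)) + sn n 0 / sn n 1 * f 1 := by
      have := Finset.sum_range_succ' (fun j => sn n j / sn n (j+1) * f (j+1)) (n-1)
      have hn1 : n - 1 + 1 = n := by omega
      rw [hn1] at this
      rw [this]
    rw [hrw, sn_zero]
    simp
  calc _ ≤ (∑ j ∈ range n, sn n (j+2) / sn n (j+1) * f (j+1))
        + ∑ j ∈ range n, sn n j / sn n (j+1) * f (j+1) := add_le_add hA hB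
    _ = ∑ j ∈ range n, (sn n j + sn n (j+2)) / sn n (j+1) * f (j+1) := by
        rw [← Finset.sum_add_distrib]
        apply Finset.sum_congr rfl
        intro j _
        ring
    _ = 2 * Real.cos (tht n) * ∑ j ∈ range n, f (j+1) := by
        rw [Finset.mul_sum]
        apply Finset.sum_congr rfl
        intro j hj
        simp only [Finset.mem_range] at hj
        rw [sn_rec]
        rw [mul_div_assoc, div_self (sn_pos n (by omega) (by omega)).ne']
        ring

lemma schur (hn : 1 ≤ n) (u v : ℕ → ℝ) (hu : ∀ j, 0 ≤ u j) (hv : ∀ j, 0 ≤ v j)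
    (t : ℝ) (ht : 0 < t) :
    ∑ j ∈ range (n-1), (v (j+1) * u (j+2) + v (j+2) * u (j+1))
      ≤ Real.cos (tht n) * (t * ∑ j ∈ range n, v (j+1)^2 + t⁻¹ * ∑ j ∈ range n, u (j+1)^2) := by
  have key : ∀ j < n - 1,
      v (j+1) * u (j+2) + v (j+2) * u (j+1)
        ≤ t/2 * (sn n (j+2) / sn n (j+1) * v (j+1)^2 + sn n (j+1) / sn n (j+2) * v (j+2)^2)
          + t⁻¹/2 * (sn n (j+2) / sn n (j+1) * u (j+1)^2 + sn n (j+1) / sn n (j+2) * u (j+2)^2) := by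
    intro j hj
    have hp1 : 0 < sn n (j+1) := sn_pos n (by omega) (by omega)
    have hp2 : 0 < sn n (j+2) := sn_pos n (by omega) (by omega)
    have hr1 : 0 < t * (sn n (j+2) / sn n (j+1)) := by positivity
    have hr2 : 0 < t * (sn n (j+1) / sn n (j+2)) := by positivity
    have e1 := amgm (t * (sn n (j+2) / sn n (j+1))) (v (j+1)) (u (j+2)) hr1
    have e2 := amgm (t * (sn n (j+1) / sn n (j+2))) (v (j+2)) (u (j+1)) hr2
    rw [mul_inv, show (sn n (j+2) / sn n (j+1))⁻¹ = sn n (j+1) / sn n (j+2) by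
      rw [inv_div]] at e1
    rw [mul_inv, show (sn n (j+1) / sn n (j+2))⁻¹ = sn n (j+2) / sn n (j+1) by
      rw [inv_div]] at e2
    calc v (j+1) * u (j+2) + v (j+2) * u (j+1) ≤ _ + _ := add_le_add e1 e2
      _ = _ := by ring
  calc ∑ j ∈ range (n-1), (v (j+1) * u (j+2) + v (j+2) * u (j+1))
      ≤ ∑ j ∈ range (n-1),
        (t/2 * (sn n (j+2) / sn n (j+1) * v (j+1)^2 + sn n (j+1) / sn n (j+2) * v (j+2)^2)
          + t⁻¹/2 * (sn n (j+2) / sn n (j+1) * u (j+1)^2 + sn n (j+1) / sn n (j+2) * u (j+2)^2)) := by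
        apply Finset.sum_le_sum
        intro j hj
        exact key j (Finset.mem_range.1 hj)
    _ = t/2 * ∑ j ∈ range (n-1), (sn n (j+2) / sn n (j+1) * v (j+1)^2 + sn n (j+1) / sn n (j+2) * v (j+2)^2)
        + t⁻¹/2 * ∑ j ∈ range (n-1), (sn n (j+2) / sn n (j+1) * u (j+1)^2 + sn n (j+1) / sn n (j+2) * u (j+2)^2) := by
        rw [Finset.sum_add_distrib, Finset.mul_sum, Finset.mul_sum]
    _ ≤ t/2 * (2 * Real.cos (tht n) * ∑ j ∈ range n, v (j+1)^2)
        + t⁻¹/2 * (2 * Real.cos (tht n) * ∑ j ∈ range n, u (j+1)^2) := by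
        have ht2 : (0:ℝ) ≤ t/2 := by positivity
        have ht3 : (0:ℝ) ≤ t⁻¹/2 := by positivity
        exact add_le_add
          (mul_le_mul_of_nonneg_left (collect n hn (fun j => v j ^2) (fun j => sq_nonneg _)) ht2)
          (mul_le_mul_of_nonneg_left (collect n hn (fun j => u j ^2) (fun j => sq_nonneg _)) ht3)
    _ = Real.cos (tht n) * (t * ∑ j ∈ range n, v (j+1)^2 + t⁻¹ * ∑ j ∈ range n, u (j+1)^2) := by
        ring

end RealCore
open Finset Real

lemma opNorm_eq {n : ℕ} (M : Matrix (Fin n) (Fin n) ℂ) :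
    opNorm M = ‖Matrix.toEuclideanCLM (𝕜 := ℂ) M‖ := by
  unfold opNorm
  rw [Subsingleton.elim (Fintype.ofFinite (Fin n)) (inferInstance : Fintype (Fin n)),
    Subsingleton.elim (Classical.decEq (Fin n)) (inferInstance : DecidableEq (Fin n))]

lemma commD_eq {n : ℕ} (D : Matrix (Fin n) (Fin n) ℂ) (a : Fin n → ℂ) :
    commD D a = D * Matrix.diagonal a - Matrix.diagonal a * D := by
  unfold commD
  rw [Subsingleton.elim (Fintype.ofFinite (Fin n)) (inferInstance : Fintype (Fin n)),
    Subsingleton.elim (Classical.decEq (Fin n)) (inferInstance : DecidableEq (Fin n))]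

lemma commD_apply {n : ℕ} (D : Matrix (Fin n) (Fin n) ℂ) (a : Fin n → ℂ) (i j : Fin n) :
    commD D a i j = D i j * (a j - a i) := by
  rw [commD_eq]
  simp [Matrix.sub_apply, Matrix.mul_diagonal, Matrix.diagonal_mul]
  ring

/-- 1-based padded extension of a vector on `Fin n`. -/
noncomputable def Xext (n : ℕ) (x : Fin n → ℂ) (j : ℕ) : ℂ :=
  if h : 1 ≤ j ∧ j ≤ n then x ⟨j - 1, by omega⟩ else 0

/-- The off-diagonal data `b k = w k⁻¹ (a (k+1) - a k)`. -/
noncomputable def bee (n : ℕ) (w : ℕ → ℝ) (a : Fin n → ℂ) (k : ℕ) : ℂ :=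
  if h : k + 1 < n then (((w k)⁻¹ : ℝ) : ℂ) * (a ⟨k + 1, h⟩ - a ⟨k, by omega⟩) else 0

lemma Xext_zero (n : ℕ) (x : Fin n → ℂ) : Xext n x 0 = 0 := by simp [Xext]
lemma Xext_top (n : ℕ) (x : Fin n → ℂ) {j : ℕ} (h : n < j) : Xext n x j = 0 := by
  simp only [Xext]; rw [dif_neg]; omega
lemma Xext_of_lt (n : ℕ) (x : Fin n → ℂ) {j : ℕ} (h : j < n) : Xext n x (j+1) = x ⟨j, h⟩ := by
  simp only [Xext]; rw [dif_pos ⟨by omega, by omega⟩]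
  exact congrArg x (Fin.mk_eq_mk.mpr (by omega))

lemma mulVec_formula {n : ℕ} (w : ℕ → ℝ) (a : Fin n → ℂ) (x : Fin n → ℂ) (k : Fin n) :
    (commD (chainD n w) a).mulVec x k
      = bee n w a k * Xext n x ((k : ℕ) + 2) - bee n w a ((k : ℕ) - 1) * Xext n x (k : ℕ) := by
  have hterm : ∀ j : Fin n, commD (chainD n w) a k j * x j
      = (if (k : ℕ) + 1 = (j : ℕ) then bee n w a k * Xext n x ((j : ℕ) + 1) else 0)
        - (if (j : ℕ) + 1 = (k : ℕ) then bee n w a (j : ℕ) * Xext n x ((j : ℕ) + 1) else 0) := by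
    intro j
    rw [commD_apply, Xext_of_lt n x j.isLt]
    simp only [chainD, Matrix.of_apply]
    by_cases h1 : (k : ℕ) + 1 = (j : ℕ)
    · rw [if_pos h1, if_pos h1, if_neg (by omega)]
      have : bee n w a (k : ℕ) = (((w (k:ℕ))⁻¹ : ℝ) : ℂ) * (a j - a k) := by
        rw [bee, dif_pos (by omega : (k:ℕ) + 1 < n)]
        have hj : (⟨(k:ℕ)+1, by omega⟩ : Fin n) = j := Fin.ext h1
        rw [hj, Fin.eta]
      rw [this]; ring
    · rw [if_neg h1, if_neg h1]
      by_cases h2 : (j : ℕ) + 1 = (k : ℕ)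
      · rw [if_pos h2, if_pos h2]
        have : bee n w a (j : ℕ) = (((w (j:ℕ))⁻¹ : ℝ) : ℂ) * (a k - a j) := by
          rw [bee, dif_pos (by omega : (j:ℕ) + 1 < n)]
          have hj : (⟨(j:ℕ)+1, by omega⟩ : Fin n) = k := Fin.ext h2
          rw [hj, Fin.eta]
        rw [this]; ring
      · rw [if_neg h2, if_neg h2]; ring
  have hsum : (commD (chainD n w) a).mulVec x k
      = ∑ j ∈ range n,
        ((if (k : ℕ) + 1 = j then bee n w a k * Xext n x (j + 1) else 0)
          - (if j + 1 = (k : ℕ) then bee n w a j * Xext n x (j + 1) else 0)) := by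
    rw [Matrix.mulVec, dotProduct]
    calc (∑ j : Fin n, commD (chainD n w) a k j * x j)
        = ∑ j : Fin n, ((fun m : ℕ =>
          (if (k : ℕ) + 1 = m then bee n w a k * Xext n x (m + 1) else 0)
          - (if m + 1 = (k : ℕ) then bee n w a m * Xext n x (m + 1) else 0)) (j : ℕ)) :=
          Finset.sum_congr rfl (fun j _ => hterm j)
      _ = ∑ j ∈ range n, ((fun m : ℕ =>
          (if (k : ℕ) + 1 = m then bee n w a k * Xext n x (m + 1) else 0)
          - (if m + 1 = (k : ℕ) then bee n w a m * Xext n x (m + 1) else 0)) j) :=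
          Fin.sum_univ_eq_sum_range (fun m : ℕ =>
          (if (k : ℕ) + 1 = m then bee n w a k * Xext n x (m + 1) else 0)
          - (if m + 1 = (k : ℕ) then bee n w a m * Xext n x (m + 1) else 0)) n
      _ = _ := rfl
  rw [hsum, Finset.sum_sub_distrib]
  congr 1
  · rw [Finset.sum_ite_eq (range n) ((k:ℕ)+1)]
    by_cases h : (k:ℕ) + 1 ∈ range n
    · rw [if_pos h]
    · rw [if_neg h]
      simp only [Finset.mem_range] at h
      rw [Xext_top n x (by omega)]
      ring
  · have : ∀ j ∈ range n, (if j + 1 = (k : ℕ) then bee n w a j * Xext n x (j + 1) else 0)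
        = (if (k:ℕ) - 1 = j then (if 1 ≤ (k:ℕ) then bee n w a j * Xext n x (j + 1) else 0) else 0) := by
      intro j _
      by_cases h1 : j + 1 = (k : ℕ)
      · rw [if_pos h1, if_pos (by omega), if_pos (by omega)]
      · rw [if_neg h1]
        by_cases h2 : (k:ℕ) - 1 = j
        · rw [if_pos h2, if_neg (by omega)]
        · rw [if_neg h2]
    rw [Finset.sum_congr rfl this, Finset.sum_ite_eq (range n) ((k:ℕ)-1)]
    rw [if_pos (by simp only [Finset.mem_range]; omega : (k:ℕ)-1 ∈ range n)]
    by_cases h : 1 ≤ (k : ℕ)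
    · rw [if_pos h]
      congr 2
      omega
    · rw [if_neg h]
      have : (k : ℕ) = 0 := by omega
      rw [this, Xext_zero]
      ring

lemma sqrt_le_aux (V2 U2 : ℝ) (hV : 0 ≤ V2) (hU : 0 ≤ U2)
    (h : ∀ t > 0, V2 ≤ (t * V2 + t⁻¹ * U2)/2) : Real.sqrt V2 ≤ Real.sqrt U2 := by
  rcases eq_or_lt_of_le hV with hV0 | hV0
  · rw [← hV0, Real.sqrt_zero]
    exact Real.sqrt_nonneg _
  rcases eq_or_lt_of_le hU with hU0 | hU0
  · exfalso
    have := h 1 one_pos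
    simp [← hU0] at this
    nlinarith
  have hsV : 0 < Real.sqrt V2 := Real.sqrt_pos.2 hV0
  have hsU : 0 < Real.sqrt U2 := Real.sqrt_pos.2 hU0
  have ht : (0:ℝ) < Real.sqrt U2 / Real.sqrt V2 := by positivity
  have key := h _ ht
  rw [inv_div] at key
  have e1 : Real.sqrt V2 * Real.sqrt V2 = V2 := Real.mul_self_sqrt hV
  have e2 : Real.sqrt U2 * Real.sqrt U2 = U2 := Real.mul_self_sqrt hU
  have : V2 ≤ Real.sqrt U2 * Real.sqrt V2 := by
    have h1 : Real.sqrt U2 / Real.sqrt V2 * V2 = Real.sqrt U2 * Real.sqrt V2 := by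
      field_simp
      nlinarith
    have h2 : Real.sqrt V2 / Real.sqrt U2 * U2 = Real.sqrt V2 * Real.sqrt U2 := by
      field_simp
      nlinarith
    rw [h1, h2] at key
    nlinarith
  nlinarith

section Lower

variable {n : ℕ}

lemma cos_tht_pos (hn : 2 ≤ n) : 0 < Real.cos (tht n) := by
  apply Real.cos_pos_of_mem_Ioo
  constructor
  · have := tht_pos n
    linarith [Real.pi_pos]
  · show tht n < Real.pi / 2
    unfold tht
    apply div_lt_div_of_pos_left Real.pi_pos (by norm_num)
    have : (2:ℝ) ≤ n := by exact_mod_cast hn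
    linarith

noncomputable def aLow (n : ℕ) (w : ℕ → ℝ) : Fin n → ℂ :=
  fun k => (((∑ i ∈ range (k : ℕ), w i) / (2 * Real.cos (tht n)) : ℝ) : ℂ)

lemma bee_aLow (hn : 2 ≤ n) (w : ℕ → ℝ) (hw : ∀ i < n - 1, 0 < w i) (k : ℕ) :
    bee n w (aLow n w) k
      = if k + 1 < n then ((((2 * Real.cos (tht n))⁻¹ : ℝ)) : ℂ) else 0 := by
  unfold bee
  by_cases h : k + 1 < n
  · rw [dif_pos h, if_pos h]
    have hwk : w k ≠ 0 := (hw k (by omega)).ne'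
    have hc : (2 * Real.cos (tht n)) ≠ 0 := by
      have := cos_tht_pos hn
      positivity
    unfold aLow
    simp only
    rw [← Complex.ofReal_sub, ← Complex.ofReal_mul]
    congr 1
    rw [div_sub_div_same]
    have hsub : (∑ i ∈ range (k+1), w i) - ∑ i ∈ range k, w i = w k := by
      rw [Finset.sum_range_succ]; ring
    rw [hsub]
    field_simp
  · rw [dif_neg h, if_neg h]

lemma norm_bee_aLow_le (hn : 2 ≤ n) (w : ℕ → ℝ) (hw : ∀ i < n - 1, 0 < w i) (k : ℕ) :
    ‖bee n w (aLow n w) k‖ ≤ (2 * Real.cos (tht n))⁻¹ := by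
  have hc : (0:ℝ) < (2 * Real.cos (tht n))⁻¹ := by
    have := cos_tht_pos hn; positivity
  rw [bee_aLow hn w hw k]
  by_cases h : k + 1 < n
  · rw [if_pos h, Complex.norm_real, Real.norm_eq_abs, abs_of_pos hc]
  · rw [if_neg h, norm_zero]
    exact hc.le

lemma opNorm_aLow_le (hn : 2 ≤ n) (w : ℕ → ℝ) (hw : ∀ i < n - 1, 0 < w i) :
    opNorm (commD (chainD n w) (aLow n w)) ≤ 1 := by
  set c : ℝ := 2 * Real.cos (tht n) with hc_def
  have hcos := cos_tht_pos hn
  have hc : (0:ℝ) < c := by positivity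
  rw [opNorm_eq]
  apply ContinuousLinearMap.opNorm_le_bound _ zero_le_one
  intro xE
  set f : Fin n → ℂ := (WithLp.equiv 2 (Fin n → ℂ)) xE with hf
  have hxE : xE = (WithLp.equiv 2 (Fin n → ℂ)).symm f := (Equiv.symm_apply_apply _ _).symm
  rw [hxE]
  change ‖(WithLp.equiv 2 (Fin n → ℂ)).symm ((commD (chainD n w) (aLow n w)).mulVec f)‖ ≤ _
  set y : Fin n → ℂ := (commD (chainD n w) (aLow n w)).mulVec f with hy
  set u : ℕ → ℝ := fun j => ‖Xext n f j‖ with hu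
  set v : ℕ → ℝ := fun j => ‖Xext n y j‖ with hv
  set V2 : ℝ := ∑ j ∈ range n, v (j+1)^2 with hV2
  set U2 : ℝ := ∑ j ∈ range n, u (j+1)^2 with hU2
  have hunn : ∀ j, 0 ≤ u j := fun j => norm_nonneg _
  have hvnn : ∀ j, 0 ≤ v j := fun j => norm_nonneg _
  -- coordinatewise bound
  have hcoord : ∀ j (hj : j < n), ‖y ⟨j, hj⟩‖ ≤ c⁻¹ * (u (j+2) + u j) := by
    intro j hj
    have := mulVec_formula w (aLow n w) f ⟨j, hj⟩
    rw [← hy] at this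
    rw [this]
    calc ‖bee n w (aLow n w) j * Xext n f (j+2) - bee n w (aLow n w) (j-1) * Xext n f j‖
        ≤ ‖bee n w (aLow n w) j * Xext n f (j+2)‖ + ‖bee n w (aLow n w) (j-1) * Xext n f j‖ :=
          norm_sub_le _ _
      _ = ‖bee n w (aLow n w) j‖ * u (j+2) + ‖bee n w (aLow n w) (j-1)‖ * u j := by
          rw [norm_mul, norm_mul]
      _ ≤ c⁻¹ * u (j+2) + c⁻¹ * u j := by
          apply add_le_add
          · exact mul_le_mul_of_nonneg_right (norm_bee_aLow_le hn w hw j) (hunn _)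
          · exact mul_le_mul_of_nonneg_right (norm_bee_aLow_le hn w hw (j-1)) (hunn _)
      _ = c⁻¹ * (u (j+2) + u j) := by ring
  have hv_eq : ∀ j (hj : j < n), v (j+1) = ‖y ⟨j, hj⟩‖ := by
    intro j hj
    rw [hv]
    simp only
    rw [Xext_of_lt n y hj]
  -- main estimate
  have hmain : ∀ t > 0, V2 ≤ (t * V2 + t⁻¹ * U2)/2 := by
    intro t ht
    have step1 : V2 ≤ c⁻¹ * ∑ j ∈ range n, (v (j+1) * u (j+2) + v (j+1) * u j) := by
      rw [hV2, Finset.mul_sum]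
      apply Finset.sum_le_sum
      intro j hj
      have hjn : j < n := Finset.mem_range.1 hj
      have : v (j+1)^2 = v (j+1) * ‖y ⟨j, hjn⟩‖ := by rw [hv_eq j hjn]; ring
      rw [this]
      calc v (j+1) * ‖y ⟨j, hjn⟩‖ ≤ v (j+1) * (c⁻¹ * (u (j+2) + u j)) :=
            mul_le_mul_of_nonneg_left (hcoord j hjn) (hvnn _)
        _ = c⁻¹ * (v (j+1) * u (j+2) + v (j+1) * u j) := by ring
    have step2 : ∑ j ∈ range n, (v (j+1) * u (j+2) + v (j+1) * u j)
        = ∑ j ∈ range (n-1), (v (j+1) * u (j+2) + v (j+2) * u (j+1)) := by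
      rw [Finset.sum_add_distrib, Finset.sum_add_distrib]
      congr 1
      · have h1 : n = (n-1) + 1 := by omega
        rw [h1, Finset.sum_range_succ]
        have h2 : u (n-1+2) = 0 := by
          rw [hu]; simp only
          rw [Xext_top n f (by omega)]
          exact norm_zero
        rw [h2, mul_zero, add_zero]
        simp
      · have h1 : n = (n-1) + 1 := by omega
        rw [h1, Finset.sum_range_succ']
        have h2 : u 0 = 0 := by rw [hu]; simp only; rw [Xext_zero]; exact norm_zero
        rw [h2, mul_zero, add_zero]
        simp
    have step3 := schur n (by omega) u v hunn hvnn t ht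
    have hchalf : c⁻¹ * Real.cos (tht n) = 1/2 := by
      rw [hc_def]
      field_simp
    calc V2 ≤ c⁻¹ * ∑ j ∈ range (n-1), (v (j+1) * u (j+2) + v (j+2) * u (j+1)) := by
          rw [← step2]; exact step1
      _ ≤ c⁻¹ * (Real.cos (tht n) * (t * V2 + t⁻¹ * U2)) := by
          apply mul_le_mul_of_nonneg_left step3 (by positivity)
      _ = (t * V2 + t⁻¹ * U2)/2 := by
          rw [← mul_assoc, hchalf]; ring
  -- translate norms
  have hnormy : ‖(WithLp.equiv 2 (Fin n → ℂ)).symm y‖ = Real.sqrt V2 := by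
    rw [EuclideanSpace.norm_eq]
    congr 1
    calc ∑ k : Fin n, ‖(WithLp.equiv 2 (Fin n → ℂ)).symm y k‖^2
        = ∑ k : Fin n, (fun m : ℕ => v (m+1)^2) (k : ℕ) := by
          apply Finset.sum_congr rfl
          intro k _
          simp only [WithLp.equiv_symm_apply, PiLp.toLp_apply]
          rw [hv_eq (k : ℕ) k.isLt, Fin.eta]
      _ = ∑ j ∈ range n, (fun m : ℕ => v (m+1)^2) j :=
          Fin.sum_univ_eq_sum_range (fun m : ℕ => v (m+1)^2) n
      _ = V2 := rfl
  have hnormx : ‖(WithLp.equiv 2 (Fin n → ℂ)).symm f‖ = Real.sqrt U2 := by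
    rw [EuclideanSpace.norm_eq]
    congr 1
    calc ∑ k : Fin n, ‖(WithLp.equiv 2 (Fin n → ℂ)).symm f k‖^2
        = ∑ k : Fin n, (fun m : ℕ => u (m+1)^2) (k : ℕ) := by
          apply Finset.sum_congr rfl
          intro k _
          simp only [WithLp.equiv_symm_apply, PiLp.toLp_apply]
          rw [hu]
          simp only
          rw [Xext_of_lt n f k.isLt, Fin.eta]
      _ = ∑ j ∈ range n, (fun m : ℕ => u (m+1)^2) j :=
          Fin.sum_univ_eq_sum_range (fun m : ℕ => u (m+1)^2) n
      _ = U2 := rfl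
  rw [hnormy, hnormx, one_mul]
  exact sqrt_le_aux V2 U2 (Finset.sum_nonneg (fun j _ => sq_nonneg _))
    (Finset.sum_nonneg (fun j _ => sq_nonneg _)) hmain

end Lower

section Upper

noncomputable def dirc (z : ℂ) : ℂ := if z = 0 then 1 else z / (‖z‖ : ℂ)

lemma norm_dirc (z : ℂ) : ‖dirc z‖ = 1 := by
  unfold dirc
  by_cases h : z = 0
  · rw [if_pos h]; simp
  · rw [if_neg h, norm_div, Complex.norm_real, Real.norm_eq_abs,
      abs_of_pos (norm_pos_iff.2 h), div_self (norm_pos_iff.2 h).ne']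

lemma mul_conj_dirc (z : ℂ) : z * (starRingEnd ℂ) (dirc z) = ((‖z‖ : ℝ) : ℂ) := by
  unfold dirc
  by_cases h : z = 0
  · rw [if_pos h]; simp [h]
  · rw [if_neg h]
    rw [map_div₀, Complex.conj_ofReal]
    rw [div_eq_mul_inv, ← mul_assoc]
    rw [Complex.mul_conj]
    have h1 : Complex.normSq z = ‖z‖^2 := by
      rw [Complex.normSq_eq_norm_sq]
    rw [h1]
    have hz : (0:ℝ) < ‖z‖ := norm_pos_iff.2 h
    rw [show ((‖z‖^2 : ℝ) : ℂ) = ((‖z‖:ℝ):ℂ) * ((‖z‖:ℝ):ℂ) by push_cast; ring]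
    rw [mul_assoc, mul_inv_cancel₀ (by exact_mod_cast hz.ne'), mul_one]

noncomputable def uvp (b : ℕ → ℂ) : ℕ → ℂ × ℂ
  | 0 => (1, 1)
  | k+1 => (-((starRingEnd ℂ) (dirc (b k))) * (starRingEnd ℂ) (uvp b k).2,
            ((starRingEnd ℂ) (dirc (b k))) * (starRingEnd ℂ) (uvp b k).1)

lemma uvp_norm (b : ℕ → ℂ) (k : ℕ) : ‖(uvp b k).1‖ = 1 ∧ ‖(uvp b k).2‖ = 1 := by
  induction k with
  | zero => simp [uvp]
  | succ k ih =>
    simp only [uvp, Prod.fst, Prod.snd]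
    constructor
    · rw [norm_mul, norm_neg, RCLike.norm_conj, RCLike.norm_conj, norm_dirc, ih.2, one_mul]
    · rw [norm_mul, RCLike.norm_conj, RCLike.norm_conj, norm_dirc, ih.1, one_mul]

lemma uvp_key (b : ℕ → ℂ) (k : ℕ) :
    b k * ((uvp b k).1 * (uvp b (k+1)).2 - (uvp b (k+1)).1 * (uvp b k).2)
      = 2 * ((‖b k‖ : ℝ) : ℂ) := by
  obtain ⟨hu, hv⟩ := uvp_norm b k
  set u := (uvp b k).1
  set v := (uvp b k).2
  have h1 : (uvp b (k+1)).2 = (starRingEnd ℂ) (dirc (b k)) * (starRingEnd ℂ) u := rfl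
  have h2 : (uvp b (k+1)).1 = -((starRingEnd ℂ) (dirc (b k))) * (starRingEnd ℂ) v := rfl
  rw [h1, h2]
  have hu2 : u * (starRingEnd ℂ) u = 1 := by
    rw [Complex.mul_conj, Complex.normSq_eq_norm_sq]
    rw [hu]
    norm_num
  have hv2 : (starRingEnd ℂ) v * v = 1 := by
    rw [mul_comm, Complex.mul_conj, Complex.normSq_eq_norm_sq]
    rw [hv]
    norm_num
  calc b k * (u * ((starRingEnd ℂ) (dirc (b k)) * (starRingEnd ℂ) u)
        - -((starRingEnd ℂ) (dirc (b k))) * (starRingEnd ℂ) v * v)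
      = b k * (starRingEnd ℂ) (dirc (b k)) * (u * (starRingEnd ℂ) u + (starRingEnd ℂ) v * v) := by
        ring
    _ = ((‖b k‖ : ℝ) : ℂ) * (1 + 1) := by rw [mul_conj_dirc, hu2, hv2]
    _ = 2 * ((‖b k‖ : ℝ) : ℂ) := by ring

lemma tele (z : ℕ → ℂ) (m : ℕ) : ‖z m - z 0‖ ≤ ∑ k ∈ range m, ‖z (k+1) - z k‖ := by
  induction m with
  | zero => simp
  | succ m ih =>
    rw [Finset.sum_range_succ]
    calc ‖z (m+1) - z 0‖ ≤ ‖z m - z 0‖ + ‖z (m+1) - z m‖ := by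
          have : z (m+1) - z 0 = (z m - z 0) + (z (m+1) - z m) := by ring
          rw [this]; exact norm_add_le _ _
      _ ≤ _ := by linarith

lemma bee_sum_le {n : ℕ} (hn : 2 ≤ n) (w : ℕ → ℝ) (a : Fin n → ℂ)
    (ha : opNorm (commD (chainD n w) a) ≤ 1) :
    ∑ j ∈ range (n-1), ‖bee n w a j‖ ≤ (n : ℝ) / 2 := by
  set b : ℕ → ℂ := bee n w a with hb
  set vv : Fin n → ℂ := fun k => (uvp b (k : ℕ)).2 with hvv
  set yy : EuclideanSpace ℂ (Fin n) :=
    (WithLp.equiv 2 (Fin n → ℂ)).symm (fun k => (starRingEnd ℂ) ((uvp b (k : ℕ)).1)) with hyy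
  set xx : EuclideanSpace ℂ (Fin n) := (WithLp.equiv 2 (Fin n → ℂ)).symm vv with hxx
  set T := Matrix.toEuclideanCLM (𝕜 := ℂ) (commD (chainD n w) a) with hT
  have hTxx : T xx = (WithLp.equiv 2 (Fin n → ℂ)).symm ((commD (chainD n w) a).mulVec vv) := by
    rw [hxx]; rfl
  have hinner : (inner ℂ yy (T xx) : ℂ) = ((∑ j ∈ range (n-1), 2 * ‖b j‖ : ℝ) : ℂ) := by
    rw [hTxx]
    rw [PiLp.inner_apply]
    calc ∑ k : Fin n, (inner ℂ (yy k) ((WithLp.equiv 2 (Fin n → ℂ)).symm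
            ((commD (chainD n w) a).mulVec vv) k) : ℂ)
        = ∑ k : Fin n, (fun m : ℕ => (uvp b m).1 *
            (b m * Xext n vv (m+2) - b (m-1) * Xext n vv m)) (k : ℕ) := by
          apply Finset.sum_congr rfl
          intro k _
          rw [hyy]
          simp only [WithLp.equiv_symm_apply, PiLp.toLp_apply, RCLike.inner_apply]
          rw [Complex.conj_conj, mulVec_formula w a vv k]
          rw [hb]; ring
      _ = ∑ m ∈ range n, (fun m : ℕ => (uvp b m).1 *
            (b m * Xext n vv (m+2) - b (m-1) * Xext n vv m)) m :=
          Fin.sum_univ_eq_sum_range (fun m : ℕ => (uvp b m).1 *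
            (b m * Xext n vv (m+2) - b (m-1) * Xext n vv m)) n
      _ = ((∑ j ∈ range (n-1), 2 * ‖b j‖ : ℝ) : ℂ) := by
          have hb0 : b (n-1) = 0 := by
            rw [hb, bee, dif_neg (by omega)]
          calc ∑ m ∈ range n, (fun m : ℕ => (uvp b m).1 *
                (b m * Xext n vv (m+2) - b (m-1) * Xext n vv m)) m
              = ∑ m ∈ range n, ((uvp b m).1 * (b m * Xext n vv (m+2))
                - (uvp b m).1 * (b (m-1) * Xext n vv m)) := by
                apply Finset.sum_congr rfl; intro m _; ring
            _ = (∑ m ∈ range n, (uvp b m).1 * (b m * Xext n vv (m+2)))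
                - ∑ m ∈ range n, (uvp b m).1 * (b (m-1) * Xext n vv m) :=
                Finset.sum_sub_distrib _ _
            _ = (∑ m ∈ range (n-1), (uvp b m).1 * (b m * (uvp b (m+1)).2))
                - ∑ m ∈ range (n-1), (uvp b (m+1)).1 * (b m * (uvp b m).2) := by
                congr 1
                · have hsr := Finset.sum_range_succ
                    (fun m => (uvp b m).1 * (b m * Xext n vv (m+2))) (n-1)
                  rw [show n-1+1 = n by omega] at hsr
                  rw [hsr, hb0]
                  simp only [zero_mul, mul_zero, add_zero]
                  apply Finset.sum_congr rfl
                  intro m hm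
                  have hm' : m + 1 < n := by
                    simp only [Finset.mem_range] at hm; omega
                  rw [show m + 2 = (m+1) + 1 by omega, Xext_of_lt n vv hm']
                · have hsr := Finset.sum_range_succ'
                    (fun m => (uvp b m).1 * (b (m - 1) * Xext n vv m)) (n-1)
                  rw [show n-1+1 = n by omega] at hsr
                  rw [hsr, Xext_zero n vv, mul_zero, mul_zero, add_zero]
                  apply Finset.sum_congr rfl
                  intro m hm
                  have hm' : m < n := by
                    simp only [Finset.mem_range] at hm; omega
                  rw [show m + 1 - 1 = m by omega, Xext_of_lt n vv hm']
            _ = ∑ m ∈ range (n-1), 2 * ((‖b m‖ : ℝ) : ℂ) := by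
                rw [← Finset.sum_sub_distrib]
                apply Finset.sum_congr rfl
                intro m _
                rw [← uvp_key b m]
                ring
            _ = ((∑ j ∈ range (n-1), 2 * ‖b j‖ : ℝ) : ℂ) := by
                push_cast
                rfl
  -- norms of the test vectors
  have hnxx : ‖xx‖ = Real.sqrt n := by
    rw [hxx, EuclideanSpace.norm_eq]
    congr 1
    calc ∑ k : Fin n, ‖(WithLp.equiv 2 (Fin n → ℂ)).symm vv k‖^2
        = ∑ _k : Fin n, (1:ℝ) := by
          apply Finset.sum_congr rfl
          intro k _
          simp only [WithLp.equiv_symm_apply, PiLp.toLp_apply]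
          rw [hvv]
          simp only
          rw [(uvp_norm b (k : ℕ)).2]
          norm_num
      _ = n := by simp
  have hnyy : ‖yy‖ = Real.sqrt n := by
    rw [hyy, EuclideanSpace.norm_eq]
    congr 1
    calc ∑ k : Fin n, ‖(WithLp.equiv 2 (Fin n → ℂ)).symm
            (fun k => (starRingEnd ℂ) ((uvp b (k : ℕ)).1)) k‖^2
        = ∑ _k : Fin n, (1:ℝ) := by
          apply Finset.sum_congr rfl
          intro k _
          simp only [WithLp.equiv_symm_apply, PiLp.toLp_apply]
          rw [RCLike.norm_conj, (uvp_norm b (k : ℕ)).1]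
          norm_num
      _ = n := by simp
  have hTnorm : ‖T‖ ≤ 1 := by
    rw [hT, ← opNorm_eq]
    exact ha
  have hsum_nonneg : (0:ℝ) ≤ ∑ j ∈ range (n-1), 2 * ‖b j‖ :=
    Finset.sum_nonneg (fun j _ => by positivity)
  have hfinal : ∑ j ∈ range (n-1), 2 * ‖b j‖ ≤ n := by
    calc ∑ j ∈ range (n-1), 2 * ‖b j‖
        = ‖((∑ j ∈ range (n-1), 2 * ‖b j‖ : ℝ) : ℂ)‖ := by
          rw [Complex.norm_real, Real.norm_eq_abs, abs_of_nonneg hsum_nonneg]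
      _ = ‖(inner ℂ yy (T xx) : ℂ)‖ := by rw [hinner]
      _ ≤ ‖yy‖ * ‖T xx‖ := norm_inner_le_norm _ _
      _ ≤ ‖yy‖ * (‖T‖ * ‖xx‖) := by
          apply mul_le_mul_of_nonneg_left (T.le_opNorm xx) (norm_nonneg _)
      _ ≤ Real.sqrt n * (1 * Real.sqrt n) := by
          rw [hnxx, hnyy]
          apply mul_le_mul_of_nonneg_left _ (Real.sqrt_nonneg _)
          apply mul_le_mul_of_nonneg_right hTnorm (Real.sqrt_nonneg _)
      _ = n := by
          rw [one_mul, Real.mul_self_sqrt (by positivity)]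
  have h2 : ∑ j ∈ range (n-1), 2 * ‖b j‖ = 2 * ∑ j ∈ range (n-1), ‖b j‖ := by
    rw [Finset.mul_sum]
  rw [h2] at hfinal
  linarith

end Upper

lemma dist_le_upper {n : ℕ} (hn : 2 ≤ n) (w : ℕ → ℝ) (hw : ∀ i < n - 1, 0 < w i)
    (hne : (range (n-1)).Nonempty)
    (a : Fin n → ℂ) (ha : opNorm (commD (chainD n w) a) ≤ 1)
    (h0 : 0 < n) (hl : n - 1 < n) :
    ‖a ⟨n-1, hl⟩ - a ⟨0, h0⟩‖ ≤ (n : ℝ)/2 * ((range (n-1)).sup' hne w) := by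
  set W : ℝ := (range (n-1)).sup' hne w with hW
  have hW0 : 0 < W := lt_of_lt_of_le (hw 0 (by omega))
    (Finset.le_sup' w (Finset.mem_range.2 (by omega)))
  set z : ℕ → ℂ := fun j => Xext n a (j+1) with hz_def
  have hz : ∀ j (hj : j < n), z j = a ⟨j, hj⟩ := by
    intro j hj
    rw [hz_def]
    simp only
    exact Xext_of_lt n a hj
  have htele := tele z (n-1)
  rw [hz (n-1) hl, hz 0 h0] at htele
  refine htele.trans ?_
  have hstep : ∀ k ∈ range (n-1), ‖z (k+1) - z k‖ = w k * ‖bee n w a k‖ := by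
    intro k hk
    have hk' : k < n - 1 := Finset.mem_range.1 hk
    have hk1 : k + 1 < n := by omega
    have hkn : k < n := by omega
    rw [hz (k+1) hk1, hz k hkn]
    have hbk : (w k : ℂ) * bee n w a k = a ⟨k+1, hk1⟩ - a ⟨k, hkn⟩ := by
      rw [bee, dif_pos hk1, ← mul_assoc, ← Complex.ofReal_mul,
        mul_inv_cancel₀ (hw k hk').ne', Complex.ofReal_one, one_mul]
    rw [← hbk, norm_mul, Complex.norm_real, Real.norm_eq_abs, abs_of_pos (hw k hk')]
  calc ∑ k ∈ range (n-1), ‖z (k+1) - z k‖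
      = ∑ k ∈ range (n-1), w k * ‖bee n w a k‖ := Finset.sum_congr rfl hstep
    _ ≤ ∑ k ∈ range (n-1), W * ‖bee n w a k‖ := by
        apply Finset.sum_le_sum
        intro k hk
        exact mul_le_mul_of_nonneg_right (Finset.le_sup' w hk) (norm_nonneg _)
    _ = W * ∑ k ∈ range (n-1), ‖bee n w a k‖ := by rw [Finset.mul_sum]
    _ ≤ W * ((n:ℝ)/2) := mul_le_mul_of_nonneg_left (bee_sum_le hn w a ha) hW0.le
    _ = (n:ℝ)/2 * W := by ring


theorem stmt18 {n : ℕ} (hn : 2 ≤ n) (w : ℕ → ℝ) (hw : ∀ i < n - 1, 0 < w i) :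
    ENNReal.ofReal ((∑ i ∈ Finset.range (n - 1), w i) /
        (2 * Real.cos (Real.pi / ((n : ℝ) + 1)))) ≤
      ncDist (chainD n w) ⟨0, by omega⟩ ⟨n - 1, by omega⟩ ∧
    ncDist (chainD n w) ⟨0, by omega⟩ ⟨n - 1, by omega⟩ ≤
      ENNReal.ofReal (((n : ℝ) / 2) *
        (Finset.range (n - 1)).sup' (by simp; omega) w) := by
  have hcos := cos_tht_pos hn
  have hth : Real.pi / ((n : ℝ) + 1) = tht n := rfl
  constructor
  · unfold ncDist
    apply le_iSup₂_of_le (aLow n w) (opNorm_aLow_le hn w hw)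
    apply ENNReal.ofReal_le_ofReal
    have h0 : aLow n w ⟨0, by omega⟩ = 0 := by
      rw [aLow]
      simp
    have hl : aLow n w ⟨n-1, by omega⟩
        = (((∑ i ∈ Finset.range (n - 1), w i) / (2 * Real.cos (tht n)) : ℝ) : ℂ) := rfl
    rw [h0, hl, zero_sub, norm_neg, Complex.norm_real, Real.norm_eq_abs, hth]
    exact le_abs_self _
  · unfold ncDist
    apply iSup₂_le
    intro a ha
    apply ENNReal.ofReal_le_ofReal
    rw [norm_sub_rev]
    exact dist_le_upper hn w hw (by simp; omega) a ha (by omega) (by omega)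
end

section
/- Let b₁, b₂, b₃ ≥ 0 be real numbers and let B ∈ M_4(ℝ) be the matrix with B_{12} = b₁, B_{23} = b₂, B_{34} = b₃, B_{21} = −b₁, B_{32} = −b₂, B_{43} = −b₃ and all other entries 0, and set β = b₁² + b₂² + b₃². Then the operator norm of B (with respect to the Euclidean norm) satisfies ‖B‖ = sqrt( (β + sqrt(β² − 4·b₁²·b₃²)) / 2 ); moreover ‖B‖ ≤ 1 if and only if b₁ ≤ 1, b₃ ≤ 1 and b₂² ≤ (1 − b₁²)(1 − b₃²). -/
open scoped ENNReal

lemma opNorm_eq4 (M : Matrix (Fin 4) (Fin 4) ℂ) :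
    opNorm M = ‖Matrix.toEuclideanCLM (𝕜 := ℂ) M‖ := by
  unfold opNorm; congr!

lemma quad_aux (a s t u v : ℝ) (hs : 0 ≤ s) (ht : 0 ≤ t) (ha : 0 ≤ a) (hst : a^2 = s*t)
    (hu : 0 ≤ u) (hv : 0 ≤ v) : 2*a*u*v ≤ s*u^2 + t*v^2 := by
  have key : Real.sqrt s * Real.sqrt t = a := by
    rw [← Real.sqrt_mul hs, ← hst, Real.sqrt_sq ha]
  nlinarith [sq_nonneg (Real.sqrt s * u - Real.sqrt t * v), Real.sq_sqrt hs, Real.sq_sqrt ht,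
    key, mul_nonneg hu hv, sq_nonneg u, sq_nonneg v]

set_option maxHeartbeats 2000000 in
theorem stmt19 (b₁ b₂ b₃ : ℝ) (h1 : 0 ≤ b₁) (h2 : 0 ≤ b₂) (h3 : 0 ≤ b₃) :
    (opNorm !![0, (b₁ : ℂ), 0, 0;
               (-b₁ : ℝ), 0, (b₂ : ℂ), 0;
               0, (-b₂ : ℝ), 0, (b₃ : ℂ);
               0, 0, (-b₃ : ℝ), 0] =
      Real.sqrt (((b₁ ^ 2 + b₂ ^ 2 + b₃ ^ 2) +
        Real.sqrt ((b₁ ^ 2 + b₂ ^ 2 + b₃ ^ 2) ^ 2 - 4 * b₁ ^ 2 * b₃ ^ 2)) / 2)) ∧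
    (opNorm !![0, (b₁ : ℂ), 0, 0;
               (-b₁ : ℝ), 0, (b₂ : ℂ), 0;
               0, (-b₂ : ℝ), 0, (b₃ : ℂ);
               0, 0, (-b₃ : ℝ), 0] ≤ 1 ↔
      b₁ ≤ 1 ∧ b₃ ≤ 1 ∧ b₂ ^ 2 ≤ (1 - b₁ ^ 2) * (1 - b₃ ^ 2)) := by
  set M : Matrix (Fin 4) (Fin 4) ℂ :=
    !![0, (b₁ : ℂ), 0, 0;
       (-b₁ : ℝ), 0, (b₂ : ℂ), 0;
       0, (-b₂ : ℝ), 0, (b₃ : ℂ);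
       0, 0, (-b₃ : ℝ), 0] with hM
  clear_value M
  have hd : 0 ≤ (b₁^2 + b₂^2 + b₃^2)^2 - 4*b₁^2*b₃^2 := by
    nlinarith [sq_nonneg (b₁^2 - b₃^2), sq_nonneg b₂, sq_nonneg b₁, sq_nonneg b₃,
      sq_nonneg (b₁*b₃)]
  set β := b₁^2 + b₂^2 + b₃^2 with hβ
  set s := Real.sqrt (β^2 - 4*b₁^2*b₃^2) with hsdef
  have hs0 : 0 ≤ s := Real.sqrt_nonneg _
  have hs2 : s^2 = β^2 - 4*b₁^2*b₃^2 := Real.sq_sqrt hd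
  set μ := (β + s)/2 with hμdef
  have hβ0 : 0 ≤ β := by positivity
  have hμ0 : 0 ≤ μ := by positivity
  clear_value β s μ
  have hchar : μ^2 = β*μ - b₁^2*b₃^2 := by rw [hμdef]; nlinarith [hs2]
  have hchar' : μ^2 = (b₁^2+b₂^2+b₃^2)*μ - b₁^2*b₃^2 := by rw [← hβ]; exact hchar
  have h1μ : b₁^2 ≤ μ := by
    rw [hμdef]; nlinarith [hs0, hs2, sq_nonneg (s - (b₁^2 - b₂^2 - b₃^2)), sq_nonneg (b₁*b₂)]
  have h3μ : b₃^2 ≤ μ := by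
    rw [hμdef]; nlinarith [hs0, hs2, sq_nonneg (s - (b₃^2 - b₂^2 - b₁^2)), sq_nonneg (b₂*b₃)]
  have h12 : b₁^2 + b₂^2 ≤ μ := by
    rw [hμdef]; nlinarith [hs0, hs2, sq_nonneg (s - (b₁^2 + b₂^2 - b₃^2)), sq_nonneg (b₂*b₃)]
  have h23 : b₂^2 + b₃^2 ≤ μ := by
    rw [hμdef]; nlinarith [hs0, hs2, sq_nonneg (s - (b₂^2 + b₃^2 - b₁^2)), sq_nonneg (b₁*b₂)]
  set T := Matrix.toEuclideanCLM (𝕜 := ℂ) M with hT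
  clear_value T
  have hmul : ∀ v : Fin 4 → ℂ, M.mulVec v =
      ![(b₁:ℂ) * v 1, -(b₁:ℂ) * v 0 + (b₂:ℂ) * v 2,
        -(b₂:ℂ) * v 1 + (b₃:ℂ) * v 3, -(b₃:ℂ) * v 2] := by
    intro v; funext i
    fin_cases i <;> simp [hM, Matrix.mulVec, dotProduct, Fin.sum_univ_four]
  have hTx : ∀ x : EuclideanSpace ℂ (Fin 4),
      T x = (WithLp.equiv 2 (Fin 4 → ℂ)).symm (M.mulVec (WithLp.equiv 2 (Fin 4 → ℂ) x)) := by
    intro x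
    rw [hT]
    rfl
  have hnormsq : ∀ y : Fin 4 → ℂ, ‖(WithLp.equiv 2 (Fin 4 → ℂ)).symm y‖ ^ 2
      = ‖y 0‖^2 + ‖y 1‖^2 + ‖y 2‖^2 + ‖y 3‖^2 := by
    intro y
    rw [EuclideanSpace.norm_eq, Real.sq_sqrt (by positivity)]
    simp [Fin.sum_univ_four]
  have hTnormsq : ∀ x : EuclideanSpace ℂ (Fin 4), ‖T x‖^2 =
      ‖(b₁:ℂ) * x 1‖^2 + ‖-(b₁:ℂ) * x 0 + (b₂:ℂ) * x 2‖^2 +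
      ‖-(b₂:ℂ) * x 1 + (b₃:ℂ) * x 3‖^2 + ‖-(b₃:ℂ) * x 2‖^2 := by
    intro x
    rw [hTx x, hmul, hnormsq]
    norm_num [Matrix.cons_val_two, Matrix.cons_val_three, Matrix.vecHead, Matrix.vecTail]
  have hxnormsq : ∀ x : EuclideanSpace ℂ (Fin 4),
      ‖x‖^2 = ‖x 0‖^2 + ‖x 1‖^2 + ‖x 2‖^2 + ‖x 3‖^2 := by
    intro x
    rw [EuclideanSpace.norm_eq, Real.sq_sqrt (by positivity)]
    simp [Fin.sum_univ_four]
  have habs : ∀ r : ℝ, ‖((r : ℝ) : ℂ)‖^2 = r^2 := fun r => by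
    rw [Complex.norm_real, Real.norm_eq_abs, sq_abs]
  have hbound : ∀ x : EuclideanSpace ℂ (Fin 4), ‖T x‖ ≤ Real.sqrt μ * ‖x‖ := by
    intro x
    have hsq : ‖T x‖^2 ≤ μ * ‖x‖^2 := by
      rw [hTnormsq x, hxnormsq x]
      have e1 : ‖-(b₁:ℂ) * x 0 + (b₂:ℂ) * x 2‖ ≤ b₁ * ‖x 0‖ + b₂ * ‖x 2‖ := by
        calc ‖-(b₁:ℂ) * x 0 + (b₂:ℂ) * x 2‖ ≤ ‖-(b₁:ℂ) * x 0‖ + ‖(b₂:ℂ) * x 2‖ :=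
              norm_add_le _ _
        _ = b₁ * ‖x 0‖ + b₂ * ‖x 2‖ := by
              simp [norm_mul, Complex.norm_real, Real.norm_eq_abs,
                abs_of_nonneg h1, abs_of_nonneg h2]
      have e2 : ‖-(b₂:ℂ) * x 1 + (b₃:ℂ) * x 3‖ ≤ b₂ * ‖x 1‖ + b₃ * ‖x 3‖ := by
        calc ‖-(b₂:ℂ) * x 1 + (b₃:ℂ) * x 3‖ ≤ ‖-(b₂:ℂ) * x 1‖ + ‖(b₃:ℂ) * x 3‖ :=
              norm_add_le _ _
        _ = b₂ * ‖x 1‖ + b₃ * ‖x 3‖ := by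
              simp [norm_mul, Complex.norm_real, Real.norm_eq_abs,
                abs_of_nonneg h2, abs_of_nonneg h3]
      have e1' : ‖-(b₁:ℂ) * x 0 + (b₂:ℂ) * x 2‖^2 ≤ (b₁ * ‖x 0‖ + b₂ * ‖x 2‖)^2 :=
        pow_le_pow_left₀ (norm_nonneg _) e1 2
      have e2' : ‖-(b₂:ℂ) * x 1 + (b₃:ℂ) * x 3‖^2 ≤ (b₂ * ‖x 1‖ + b₃ * ‖x 3‖)^2 :=
        pow_le_pow_left₀ (norm_nonneg _) e2 2
      have en1 : ‖(b₁:ℂ) * x 1‖ = b₁ * ‖x 1‖ := by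
        simp [norm_mul, Complex.norm_real, Real.norm_eq_abs, abs_of_nonneg h1]
      have en3 : ‖-(b₃:ℂ) * x 2‖ = b₃ * ‖x 2‖ := by
        simp [norm_mul, Complex.norm_real, Real.norm_eq_abs, abs_of_nonneg h3]
      rw [en1, en3]
      have q1 : 2*(b₁*b₂)*‖x 0‖*‖x 2‖ ≤ (μ - b₁^2)*‖x 0‖^2 + (μ - (b₂^2 + b₃^2))*‖x 2‖^2 := by
        refine quad_aux _ _ _ _ _ (by linarith) (by linarith) (by positivity) ?_
          (norm_nonneg _) (norm_nonneg _)
        nlinarith [hchar']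
      have q2 : 2*(b₂*b₃)*‖x 1‖*‖x 3‖ ≤ (μ - (b₁^2 + b₂^2))*‖x 1‖^2 + (μ - b₃^2)*‖x 3‖^2 := by
        refine quad_aux _ _ _ _ _ (by linarith) (by linarith) (by positivity) ?_
          (norm_nonneg _) (norm_nonneg _)
        nlinarith [hchar']
      nlinarith [e1', e2', q1, q2, sq_nonneg (‖x 0‖), sq_nonneg (‖x 1‖), sq_nonneg (‖x 2‖),
        sq_nonneg (‖x 3‖)]
    calc ‖T x‖ = Real.sqrt (‖T x‖^2) := (Real.sqrt_sq (norm_nonneg _)).symm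
    _ ≤ Real.sqrt (μ * ‖x‖^2) := Real.sqrt_le_sqrt hsq
    _ = Real.sqrt μ * ‖x‖ := by rw [Real.sqrt_mul hμ0, Real.sqrt_sq (norm_nonneg _)]
  have hle : ‖T‖ ≤ Real.sqrt μ :=
    ContinuousLinearMap.opNorm_le_bound _ (Real.sqrt_nonneg _) hbound
  have hge : Real.sqrt μ ≤ ‖T‖ := by
    by_cases hc : μ = b₁^2
    · set w : EuclideanSpace ℂ (Fin 4) :=
        (WithLp.equiv 2 (Fin 4 → ℂ)).symm ![1, 0, 0, 0] with hw
      have h0 : w 0 = 1 := by rw [hw]; rfl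
      have hw1 : w 1 = 0 := by rw [hw]; rfl
      have hw2 : w 2 = 0 := by rw [hw]; rfl
      have hw3 : w 3 = 0 := by rw [hw]; rfl
      clear_value w
      have hwn : ‖w‖ = 1 := by
        have h : ‖w‖^2 = 1 := by
          rw [hxnormsq w, h0, hw1, hw2, hw3]; simp
        rw [← Real.sqrt_one, ← h, Real.sqrt_sq (norm_nonneg _)]
      have hTw : ‖T w‖^2 = μ := by
        rw [hTnormsq w, h0, hw1, hw2, hw3]
        simp [Complex.norm_real, Real.norm_eq_abs, abs_of_nonneg h1]
        linarith [hc]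
      have hln := T.le_opNorm w
      rw [hwn, mul_one] at hln
      calc Real.sqrt μ = Real.sqrt (‖T w‖^2) := by rw [hTw]
      _ = ‖T w‖ := Real.sqrt_sq (norm_nonneg _)
      _ ≤ ‖T‖ := hln
    · set w : EuclideanSpace ℂ (Fin 4) :=
        (WithLp.equiv 2 (Fin 4 → ℂ)).symm
          ![((-(b₁*b₂) : ℝ) : ℂ), 0, ((μ - b₁^2 : ℝ) : ℂ), 0] with hw
      have h0 : w 0 = ((-(b₁*b₂) : ℝ) : ℂ) := by rw [hw]; rfl
      have hw1 : w 1 = 0 := by rw [hw]; rfl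
      have hw2 : w 2 = ((μ - b₁^2 : ℝ) : ℂ) := by rw [hw]; rfl
      have hw3 : w 3 = 0 := by rw [hw]; rfl
      clear_value w
      have hwnsq : ‖w‖^2 = (b₁*b₂)^2 + (μ - b₁^2)^2 := by
        rw [hxnormsq w, h0, hw1, hw2, hw3]
        simp only [habs, norm_zero]
        ring
      have hwpos : 0 < ‖w‖ := by
        have hne : μ - b₁^2 ≠ 0 := by intro hh; exact hc (by linarith)
        have hq : (0:ℝ) < (b₁*b₂)^2 + (μ - b₁^2)^2 := by positivity
        nlinarith [norm_nonneg w, hwnsq]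
      have hTwsq : ‖T w‖^2 = μ * ‖w‖^2 := by
        rw [hTnormsq w, h0, hw1, hw2, hw3, hwnsq]
        have c1' : -(b₁:ℂ) * ((-(b₁*b₂) : ℝ) : ℂ) + (b₂:ℂ) * ((μ - b₁^2 : ℝ) : ℂ)
            = ((b₂ * μ : ℝ) : ℂ) := by push_cast; ring
        have c3 : -(b₃:ℂ) * ((μ - b₁^2 : ℝ) : ℂ) = ((-(b₃ * (μ - b₁^2)) : ℝ) : ℂ) := by
          push_cast; ring
        rw [c1', c3]
        simp only [habs, norm_zero, mul_zero, zero_mul, neg_zero, add_zero, zero_add]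
        ring_nf
        nlinarith [hchar']
      have hTwn : ‖T w‖ = Real.sqrt μ * ‖w‖ := by
        have hh : Real.sqrt μ * ‖w‖ = Real.sqrt (μ * ‖w‖^2) := by
          rw [Real.sqrt_mul hμ0, Real.sqrt_sq (norm_nonneg _)]
        rw [hh, ← hTwsq, Real.sqrt_sq (norm_nonneg _)]
      have hln := T.le_opNorm w
      rw [hTwn] at hln
      exact le_of_mul_le_mul_right hln hwpos
  have hTnorm : ‖T‖ = Real.sqrt μ := le_antisymm hle hge
  have hop : opNorm M = Real.sqrt μ := by rw [opNorm_eq4, ← hT, hTnorm]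
  constructor
  · exact hop
  · rw [hop]
    have hiff : Real.sqrt μ ≤ 1 ↔ μ ≤ 1 := by
      constructor
      · intro h
        nlinarith [Real.sq_sqrt hμ0, Real.sqrt_nonneg μ, h]
      · intro h
        calc Real.sqrt μ ≤ Real.sqrt 1 := Real.sqrt_le_sqrt h
        _ = 1 := Real.sqrt_one
    rw [hiff]
    constructor
    · intro h
      refine ⟨by nlinarith [h1μ], by nlinarith [h3μ], ?_⟩
      have hsle : s ≤ 2 - β := by rw [hμdef] at h; linarith
      have hβval : β = b₁^2 + b₂^2 + b₃^2 := hβ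
      nlinarith [hs0, hs2, hsle, hβval]
    · rintro ⟨hb1, hb3, hb2⟩
      have hkey : β ≤ 1 + b₁^2*b₃^2 := by rw [hβ]; nlinarith [hb2]
      have e1 : b₁^2 ≤ 1 := by nlinarith
      have e3 : b₃^2 ≤ 1 := by nlinarith
      have hc1 : b₁^2*b₃^2 ≤ 1 := by nlinarith [e1, e3, sq_nonneg b₁, sq_nonneg b₃]
      have h4 : β^2 - 4*b₁^2*b₃^2 ≤ (2-β)^2 := by nlinarith [hkey]
      have h5 : (0:ℝ) ≤ 2 - β := by nlinarith [hkey, hc1]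
      have h2β : s ≤ 2 - β := by
        rw [hsdef]
        calc Real.sqrt (β^2 - 4*b₁^2*b₃^2) ≤ Real.sqrt ((2-β)^2) := Real.sqrt_le_sqrt h4
        _ = |2-β| := Real.sqrt_sq_eq_abs _
        _ = 2 - β := abs_of_nonneg h5
      rw [hμdef]; linarith
end
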